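/- arXiv:2105.12893 — 5 statements merged into one kernel-verified Lean document; each statement's English description precedes it below -/
import Mathlib

section
/- Let θ₁,…,θ_m ∈ Θ be candidate parameters, let X₁,…,X_N be an i.i.d. sample from the distribution with CDF F^{θ₀}, and for each i let Y₁^{θ_i},…,Y_n^{θ_i} be an i.i.d. sample from the distribution with CDF F^{θ_i}, with F_N^{θ₀} and F_n^{θ_i} the corresponding empirical distribution functions. Define the eligibility set 𝓔̂_m = { θ_i : sup_{x∈ℝ} |F_n^{θ_i}(x) − F_N^{θ₀}(x)| ≤ q_{1−α}/√N }. For any ε, ε₁, ε₂ > 0 with ε₁ + ε₂ < ε, if N > ( q_{1−α}/(ε − ε₁ − ε₂) )², then ℙ( ∃ i ∈ {1,…,m} such that sup_{x∈ℝ} |F^{θ_i}(x) − F^{θ₀}(x)| > ε and θ_i ∈ 𝓔̂_m ) ≤ 2m( e^{−2nε₁²} + e^{−2Nε₂²} ). -/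
open MeasureTheory ProbabilityTheory Filter

/-- Empirical distribution function of a finite sample of real-valued random variables. -/
noncomputable def ecdfFin {Ω : Type*} {M : ℕ} (Z : Fin M → Ω → ℝ) (ω : Ω) (x : ℝ) : ℝ :=
  (M : ℝ)⁻¹ * ∑ i, if Z i ω ≤ x then (1 : ℝ) else 0

section Hoeffding
open Real

-- Hoeffding's lemma for Bernoulli: core analytic inequality
theorem bern_log_le (p : ℝ) (hp0 : 0 ≤ p) (hp1 : p ≤ 1) (s : ℝ) :
    1 - p + p * exp s ≤ exp (s ^ 2 / 8 + p * s) := by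
  have hgpos : ∀ u : ℝ, 0 < 1 - p + p * exp u := by
    intro u
    rcases eq_or_lt_of_le hp0 with h | h
    · simp [← h]
    · nlinarith [exp_pos u, mul_pos h (exp_pos u)]
  set g : ℝ → ℝ := fun u => 1 - p + p * exp u with hg
  have hg' : ∀ u, HasDerivAt g (p * exp u) u := by
    intro u
    exact ((Real.hasDerivAt_exp u).const_mul p).const_add (1 - p)
  set φ : ℝ → ℝ := fun u => u ^ 2 / 8 + p * u - Real.log (g u) with hφ
  set φ' : ℝ → ℝ := fun u => u / 4 + p - p * exp u / g u with hφ'def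
  have hφ' : ∀ u, HasDerivAt φ (φ' u) u := by
    intro u
    have h1 : HasDerivAt (fun v : ℝ => v ^ 2 / 8 + p * v) (u / 4 + p) u := by
      have := ((hasDerivAt_pow 2 u).div_const 8).add ((hasDerivAt_id u).const_mul p)
      refine this.congr_deriv ?_; push_cast; ring
    have h2 : HasDerivAt (fun v => Real.log (g v)) (p * exp u / g u) u := by
      have := (Real.hasDerivAt_log (hgpos u).ne').comp u (hg' u)
      refine this.congr_deriv ?_; exact (div_eq_inv_mul _ _).symm
    exact h1.sub h2
  have hφ'' : ∀ u, HasDerivAt φ' (1 / 4 - p * exp u * (1 - p) / (g u) ^ 2) u := by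
    intro u
    have h1 : HasDerivAt (fun v : ℝ => v / 4 + p) (1 / 4) u := by
      simpa using ((hasDerivAt_id u).div_const 4).add_const p
    have h2 : HasDerivAt (fun v => p * exp v / g v)
        ((p * exp u * g u - p * exp u * (p * exp u)) / (g u) ^ 2) u :=
      ((Real.hasDerivAt_exp u).const_mul p).div (hg' u) (hgpos u).ne'
    have := h1.sub h2
    refine this.congr_deriv ?_
    have hgne : g u ≠ 0 := (hgpos u).ne'
    rw [show g u = 1 - p + p * exp u from rfl]
    ring
  have hφ''nonneg : ∀ u, 0 ≤ 1 / 4 - p * exp u * (1 - p) / (g u) ^ 2 := by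
    intro u
    rw [sub_nonneg, div_le_iff₀ (pow_pos (hgpos u) 2)]
    have h1 : 0 ≤ 1 - p := by linarith
    have h2 : 0 ≤ p * exp u := by positivity
    have : g u = (1 - p) + p * exp u := rfl
    nlinarith [sq_nonneg ((1 - p) - p * exp u)]
  have hmono : Monotone φ' := by
    refine monotone_of_deriv_nonneg (fun u => (hφ'' u).differentiableAt) ?_
    intro u
    rw [(hφ'' u).deriv]
    exact hφ''nonneg u
  have hφ'0 : φ' 0 = 0 := by
    simp only [hφ'def]
    have : g 0 = 1 := by simp [hg]
    rw [this]
    simp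
  have hφ0 : φ 0 = 0 := by
    have : g 0 = 1 := by simp [hg]
    simp [hφ, this]
  have hkey : ∀ u : ℝ, 0 ≤ φ u := by
    intro u
    rcases le_total 0 u with h | h
    · have : MonotoneOn φ (Set.Ici 0) := by
        refine monotoneOn_of_deriv_nonneg (convex_Ici 0)
          (fun v _ => ((hφ' v).differentiableAt).continuousAt.continuousWithinAt)
          (fun v _ => ((hφ' v).differentiableAt).differentiableWithinAt) ?_
        intro v hv
        rw [(hφ' v).deriv]
        rw [interior_Ici] at hv
        calc (0:ℝ) = φ' 0 := hφ'0.symm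
        _ ≤ φ' v := hmono (le_of_lt hv)
      have := this (Set.self_mem_Ici) (Set.mem_Ici.mpr h) h
      linarith [hφ0]
    · have : AntitoneOn φ (Set.Iic 0) := by
        refine antitoneOn_of_deriv_nonpos (convex_Iic 0)
          (fun v _ => ((hφ' v).differentiableAt).continuousAt.continuousWithinAt)
          (fun v _ => ((hφ' v).differentiableAt).differentiableWithinAt) ?_
        intro v hv
        rw [(hφ' v).deriv]
        rw [interior_Iic] at hv
        calc φ' v ≤ φ' 0 := hmono (le_of_lt hv)
        _ = 0 := hφ'0
      have := this (Set.mem_Iic.mpr h) (Set.self_mem_Iic) h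
      linarith [hφ0]
  have := hkey s
  have hlog : Real.log (g s) ≤ s ^ 2 / 8 + p * s := by
    simp only [hφ] at this; linarith
  calc 1 - p + p * exp s = exp (Real.log (g s)) := (Real.exp_log (hgpos s)).symm
  _ ≤ exp (s ^ 2 / 8 + p * s) := exp_le_exp.mpr hlog

theorem iIndepFun_precomp {Ω ι κ : Type*} [MeasurableSpace Ω] {μ : Measure Ω}
    {f : ι → Ω → ℝ} (h : iIndepFun f μ)
    {g : κ → ι} (hg : Function.Injective g) :
    iIndepFun (fun j => f (g j)) μ := by
  classical
  rw [iIndepFun_iff_measure_inter_preimage_eq_mul] at h ⊢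
  intro S sets hsets
  set sets' : ι → Set ℝ := fun i => ⋂ j ∈ S.filter (fun j => g j = i), sets j with hsets'def
  have hkey : ∀ j ∈ S, sets' (g j) = sets j := by
    intro j hj
    have hfil : S.filter (fun j' => g j' = g j) = {j} := by
      ext j'
      simp only [Finset.mem_filter, Finset.mem_singleton, hg.eq_iff]
      exact ⟨fun h => h.2, fun h => ⟨h ▸ hj, h⟩⟩
    simp only [hsets'def]
    rw [hfil]
    simp
  have hmeas' : ∀ i, i ∈ S.image g → MeasurableSet (sets' i) := by
    intro i _
    exact Finset.measurableSet_biInter _ fun j hj => hsets j (Finset.mem_filter.mp hj).1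
  calc μ (⋂ j ∈ S, f (g j) ⁻¹' sets j)
      = μ (⋂ i ∈ S.image g, f i ⁻¹' sets' i) := by
        rw [Finset.set_biInter_finset_image]
        exact congrArg μ (Set.iInter₂_congr fun j hj => by rw [hkey j hj])
    _ = ∏ i ∈ S.image g, μ (f i ⁻¹' sets' i) := h _ hmeas'
    _ = ∏ j ∈ S, μ (f (g j) ⁻¹' sets' (g j)) :=
        Finset.prod_image fun a ha b hb hab => hg hab
    _ = ∏ j ∈ S, μ (f (g j) ⁻¹' sets j) :=
        Finset.prod_congr rfl fun j hj => by rw [hkey j hj]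

section Bern
variable {Ω : Type*} [MeasurableSpace Ω] (Pr : Measure Ω) [IsProbabilityMeasure Pr]

/-- exp (s * (indicator - p)) rewritten as sum of indicators. -/
theorem exp_eq_indic {Z : Ω → ℝ} (x p s : ℝ) :
    (fun ω => exp (s * ((if Z ω ≤ x then (1:ℝ) else 0) - p))) =
      ((Z ⁻¹' Set.Iic x).indicator (fun _ => exp (s * (1 - p))) +
       (Z ⁻¹' Set.Iic x)ᶜ.indicator (fun _ => exp (s * (0 - p)))) := by
  funext ω
  by_cases h : Z ω ≤ x <;>
    simp [Set.indicator_apply, Set.mem_preimage, Set.mem_Iic, h]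

theorem bern_integrable {Z : Ω → ℝ} (hZ : Measurable Z) (x p s : ℝ) :
    Integrable (fun ω => exp (s * ((if Z ω ≤ x then (1:ℝ) else 0) - p))) Pr := by
  rw [exp_eq_indic]
  exact ((integrable_const _).indicator (hZ measurableSet_Iic)).add
    ((integrable_const _).indicator (hZ measurableSet_Iic).compl)

theorem bern_mgf_le {Z : Ω → ℝ} (hZ : Measurable Z) (x : ℝ) {p : ℝ}
    (hp : (Pr (Z ⁻¹' Set.Iic x)).toReal = p) (s : ℝ) :
    mgf (fun ω => (if Z ω ≤ x then (1:ℝ) else 0) - p) Pr s ≤ exp (s ^ 2 / 8) := by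
  have hp0 : 0 ≤ p := hp ▸ ENNReal.toReal_nonneg
  have hp1 : p ≤ 1 := by
    rw [← hp]
    exact ENNReal.toReal_le_of_le_ofReal zero_le_one (by simpa using prob_le_one)
  have hcompl : (Pr (Z ⁻¹' Set.Iic x)ᶜ).toReal = 1 - p := by
    rw [measure_compl (hZ measurableSet_Iic) (measure_ne_top _ _), measure_univ,
      ENNReal.toReal_sub_of_le (prob_le_one) (by simp)]
    simp [hp]
  have hval : mgf (fun ω => (if Z ω ≤ x then (1:ℝ) else 0) - p) Pr s
      = p * exp (s * (1 - p)) + (1 - p) * exp (s * (0 - p)) := by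
    unfold mgf
    rw [show (fun ω => exp (s * ((if Z ω ≤ x then (1:ℝ) else 0) - p))) = _ from
      exp_eq_indic x p s]
    rw [integral_add' ((integrable_const _).indicator (hZ measurableSet_Iic))
      ((integrable_const _).indicator (hZ measurableSet_Iic).compl)]
    rw [integral_indicator_const _ (hZ measurableSet_Iic),
      integral_indicator_const _ (hZ measurableSet_Iic).compl]
    rw [measureReal_def, measureReal_def, hp, hcompl]
    simp [mul_comm]
  rw [hval]
  have := bern_log_le p hp0 hp1 s
  have hexp : p * exp (s * (1 - p)) + (1 - p) * exp (s * (0 - p))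
      = exp (-(p*s)) * (1 - p + p * exp s) := by
    rw [show s * (1 - p) = s + -(p*s) by ring, show s * (0 - p) = -(p*s) by ring, exp_add]
    ring
  rw [hexp]
  calc exp (-(p*s)) * (1 - p + p * exp s) ≤ exp (-(p*s)) * exp (s ^ 2 / 8 + p * s) := by
        exact mul_le_mul_of_nonneg_left this (exp_nonneg _)
  _ = exp (s ^ 2 / 8) := by rw [← exp_add]; ring_nf

/-- One-sided Hoeffding for variables with mgf ≤ exp(s²/8). -/
theorem hoeff_sum {M : ℕ} (hM : 0 < M) {V : Fin M → Ω → ℝ}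
    (hmeas : ∀ j, Measurable (V j))
    (hindep : iIndepFun V Pr)
    (hint : ∀ j s, Integrable (fun ω => exp (s * V j ω)) Pr)
    (hmgf : ∀ j s, mgf (V j) Pr s ≤ exp (s ^ 2 / 8))
    (t : ℝ) (ht : 0 < t) :
    (Pr {ω | (M:ℝ) * t ≤ ∑ j, V j ω}).toReal ≤ exp (-2 * M * t ^ 2) := by
  have hS : Integrable (fun ω => exp ((4*t) * (∑ j, V j) ω)) Pr :=
    hindep.integrable_exp_mul_sum hmeas (fun j _ => hint j (4*t))
  have hch := measure_ge_le_exp_mul_mgf (μ := Pr) (X := ∑ j, V j) ((M:ℝ)*t)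
    (by positivity : (0:ℝ) ≤ 4*t) hS
  have hsum : {ω | (M:ℝ) * t ≤ ∑ j, V j ω} = {ω | (M:ℝ) * t ≤ (∑ j, V j) ω} := by
    simp [Finset.sum_apply]
  rw [hsum]
  refine hch.trans ?_
  rw [hindep.mgf_sum hmeas]
  have hprod : ∏ j, mgf (V j) Pr (4*t) ≤ exp ((4*t) ^ 2 / 8) ^ (M:ℕ) := by
    calc ∏ j, mgf (V j) Pr (4*t) ≤ ∏ _j : Fin M, exp ((4*t) ^ 2 / 8) :=
          Finset.prod_le_prod (fun j _ => mgf_nonneg) (fun j _ => hmgf j (4*t))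
    _ = exp ((4*t) ^ 2 / 8) ^ (M:ℕ) := by simp [Finset.prod_const]
  calc exp (-(4*t) * ((M:ℝ)*t)) * ∏ j, mgf (V j) Pr (4*t)
      ≤ exp (-(4*t) * ((M:ℝ)*t)) * exp ((4*t) ^ 2 / 8) ^ (M:ℕ) :=
        mul_le_mul_of_nonneg_left hprod (exp_nonneg _)
  _ = exp (-2 * M * t ^ 2) := by
      rw [← Real.exp_nat_mul, ← exp_add]
      congr 1
      ring
end Bern


section
variable {Ω : Type*} [MeasurableSpace Ω] (Pr : Measure Ω) [IsProbabilityMeasure Pr]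

/-- Two-sided Hoeffding bound for the deviation of the empirical CDF at a point. -/
theorem ecdf_dev {M : ℕ} (hM : 0 < M) {Z : Fin M → Ω → ℝ}
    (hmeas : ∀ j, Measurable (Z j))
    (hindep : iIndepFun Z Pr)
    (x : ℝ) {p : ℝ} (hp : ∀ j, (Pr (Z j ⁻¹' Set.Iic x)).toReal = p)
    (t : ℝ) (ht : 0 < t) :
    Pr {ω | t < |ecdfFin Z ω x - p|} ≤ ENNReal.ofReal (2 * exp (-2 * M * t ^ 2)) := by
  have hp0 : 0 ≤ p := (hp ⟨0, hM⟩) ▸ ENNReal.toReal_nonneg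
  set V : Fin M → Ω → ℝ := fun j ω => (if Z j ω ≤ x then (1:ℝ) else 0) - p with hV
  have hVmeas : ∀ j, Measurable (V j) := fun j =>
    (Measurable.ite (hmeas j measurableSet_Iic) measurable_const measurable_const).sub
      measurable_const
  have hVindep : iIndepFun V Pr := by
    have := hindep.comp (fun _ y => (if y ≤ x then (1:ℝ) else 0) - p)
      (fun _ => (Measurable.ite measurableSet_Iic measurable_const measurable_const).sub
        measurable_const)
    exact this
  have hVint : ∀ j s, Integrable (fun ω => exp (s * V j ω)) Pr := fun j s =>
    bern_integrable Pr (hmeas j) x p s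
  have hVmgf : ∀ j s, mgf (V j) Pr s ≤ exp (s ^ 2 / 8) := fun j s =>
    bern_mgf_le Pr (hmeas j) x (hp j) s
  have hMpos : (0:ℝ) < M := Nat.cast_pos.mpr hM
  have hrel : ∀ ω, ecdfFin Z ω x - p = (M:ℝ)⁻¹ * ∑ j, V j ω := by
    intro ω
    simp only [ecdfFin, hV, Finset.sum_sub_distrib, Finset.sum_const, Finset.card_univ,
      Fintype.card_fin, nsmul_eq_mul]
    field_simp
  have hsubset : {ω | t < |ecdfFin Z ω x - p|} ⊆
      {ω | (M:ℝ) * t ≤ ∑ j, V j ω} ∪ {ω | (M:ℝ) * t ≤ ∑ j, (fun j ω => -(V j ω)) j ω} := by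
    intro ω hω
    simp only [Set.mem_setOf_eq] at hω
    rw [hrel ω, abs_mul, abs_inv, abs_of_pos hMpos] at hω
    have h2 : (M:ℝ) * t < |∑ j, V j ω| := by
      have h3 := mul_lt_mul_of_pos_left hω hMpos
      rwa [← mul_assoc, mul_inv_cancel₀ hMpos.ne', one_mul] at h3
    rcases lt_abs.mp h2 with h | h
    · exact Or.inl (Set.mem_setOf_eq ▸ h.le)
    · refine Or.inr ?_
      simp only [Set.mem_setOf_eq, Finset.sum_neg_distrib]
      linarith [h]
  have hVnint : ∀ (j : Fin M) (s : ℝ), Integrable (fun ω => exp (s * (-(V j ω)))) Pr := by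
    intro j s
    simpa [mul_neg, neg_mul] using hVint j (-s)
  have hVnmgf : ∀ (j : Fin M) (s : ℝ), mgf (fun ω => -(V j ω)) Pr s ≤ exp (s ^ 2 / 8) := by
    intro j s
    have : mgf (-(V j)) Pr s = mgf (V j) Pr (-s) := mgf_neg
    calc mgf (fun ω => -(V j ω)) Pr s = mgf (V j) Pr (-s) := this
    _ ≤ exp ((-s) ^ 2 / 8) := hVmgf j (-s)
    _ = exp (s ^ 2 / 8) := by rw [neg_pow]; ring_nf
  have hA : Pr {ω | (M:ℝ) * t ≤ ∑ j, V j ω} ≤ ENNReal.ofReal (exp (-2 * M * t ^ 2)) := by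
    rw [ENNReal.le_ofReal_iff_toReal_le (measure_ne_top _ _) (exp_nonneg _)]
    exact hoeff_sum Pr hM hVmeas hVindep hVint hVmgf t ht
  have hB : Pr {ω | (M:ℝ) * t ≤ ∑ j, (fun j ω => -(V j ω)) j ω} ≤
      ENNReal.ofReal (exp (-2 * M * t ^ 2)) := by
    rw [ENNReal.le_ofReal_iff_toReal_le (measure_ne_top _ _) (exp_nonneg _)]
    refine hoeff_sum Pr hM (fun j => (hVmeas j).neg) ?_ hVnint hVnmgf t ht
    exact hVindep.comp (fun _ y => -y) (fun _ => measurable_neg)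
  calc Pr {ω | t < |ecdfFin Z ω x - p|} ≤
      Pr ({ω | (M:ℝ) * t ≤ ∑ j, V j ω} ∪ {ω | (M:ℝ) * t ≤ ∑ j, (fun j ω => -(V j ω)) j ω}) :=
        measure_mono hsubset
  _ ≤ Pr {ω | (M:ℝ) * t ≤ ∑ j, V j ω} +
      Pr {ω | (M:ℝ) * t ≤ ∑ j, (fun j ω => -(V j ω)) j ω} := measure_union_le _ _
  _ ≤ ENNReal.ofReal (exp (-2 * M * t ^ 2)) + ENNReal.ofReal (exp (-2 * M * t ^ 2)) :=
      add_le_add hA hB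
  _ = ENNReal.ofReal (2 * exp (-2 * M * t ^ 2)) := by
      rw [← ENNReal.ofReal_add (exp_nonneg _) (exp_nonneg _)]
      ring_nf
end

theorem ecdf_mem {Ω : Type*} {M : ℕ} (Z : Fin M → Ω → ℝ) (ω : Ω) (x : ℝ) :
    0 ≤ ecdfFin Z ω x ∧ ecdfFin Z ω x ≤ 1 := by
  constructor
  · apply mul_nonneg (by positivity)
    apply Finset.sum_nonneg
    intro j _
    split <;> norm_num
  · rcases Nat.eq_zero_or_pos M with h | h
    · subst h; simp [ecdfFin]
    · have hsum : (∑ i, if Z i ω ≤ x then (1:ℝ) else 0) ≤ M := by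
        calc (∑ i, if Z i ω ≤ x then (1:ℝ) else 0) ≤ ∑ _i : Fin M, (1:ℝ) :=
            Finset.sum_le_sum fun i _ => by split <;> norm_num
        _ = M := by simp
      have hMpos : (0:ℝ) < M := Nat.cast_pos.mpr h
      rw [ecdfFin, inv_mul_le_iff₀ hMpos, mul_one]
      exact hsum

end Hoeffding

open Real in
/-- **Theorem 3 (Type II error guarantee for the eligibility-set algorithm).**
With candidates `θ₁,…,θ_m`, real data of size `N` from `F^{θ₀}` and simulated samples of
size `n` from each `F^{θᵢ}`, the probability that some candidate whose output CDF is more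
than `ε` away (in KS distance) from the truth lies in the eligibility set
`𝓔̂_m = {θᵢ : sup_x |F_n^{θᵢ}(x) - F_N^{θ₀}(x)| ≤ q_{1-α}/√N}` is at most
`2m(e^{-2nε₁²} + e^{-2Nε₂²})`. -/
theorem stmt_4
    {Ω : Type*} [MeasurableSpace Ω] (Pr : Measure Ω) [IsProbabilityMeasure Pr]
    (μ : Measure ℝ) [IsProbabilityMeasure μ]
    {N n m : ℕ} (hN0 : 0 < N) (hn0 : 0 < n)
    (ν : Fin m → Measure ℝ) [∀ i, IsProbabilityMeasure (ν i)]
    (X : Fin N → Ω → ℝ) (Y : Fin m → Fin n → Ω → ℝ)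
    (hXm : ∀ i, Measurable (X i)) (hYm : ∀ i j, Measurable (Y i j))
    (hindep : iIndepFun
      (Sum.elim X (fun p : Fin m × Fin n => Y p.1 p.2)) Pr)
    (hX : ∀ k, Measure.map (X k) Pr = μ) (hY : ∀ i j, Measure.map (Y i j) Pr = ν i)
    (α : ℝ) (hα : α ∈ Set.Ioo (0 : ℝ) 1)
    (q : ℝ) (hq0 : 0 < q)
    (hq : 2 * ∑' v : ℕ, (-1 : ℝ) ^ v * Real.exp (-2 * ((v : ℝ) + 1) ^ 2 * q ^ 2) = α)
    (ε ε₁ ε₂ : ℝ) (hε : 0 < ε) (hε₁ : 0 < ε₁) (hε₂ : 0 < ε₂) (hεsum : ε₁ + ε₂ < ε)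
    (hNlarge : (N : ℝ) > (q / (ε - ε₁ - ε₂)) ^ 2) :
    (Pr {ω | ∃ i : Fin m,
        ε < (⨆ x : ℝ, |(ν i (Set.Iic x)).toReal - (μ (Set.Iic x)).toReal|) ∧
        (⨆ x : ℝ, |ecdfFin (Y i) ω x - ecdfFin X ω x|) ≤ q / Real.sqrt N}).toReal
      ≤ 2 * m * (Real.exp (-2 * n * ε₁ ^ 2) + Real.exp (-2 * N * ε₂ ^ 2)) := by
  have hd : (0:ℝ) < ε - ε₁ - ε₂ := by linarith
  set δ : ℝ := q / Real.sqrt N with hδdef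
  have hsqrtN : (0:ℝ) < Real.sqrt N := Real.sqrt_pos.mpr (Nat.cast_pos.mpr hN0)
  have hδlt : δ < ε - ε₁ - ε₂ := by
    have h1 : q / (ε - ε₁ - ε₂) < Real.sqrt N := by
      rw [show q / (ε - ε₁ - ε₂) = Real.sqrt ((q / (ε - ε₁ - ε₂)) ^ 2) from
        (Real.sqrt_sq (le_of_lt (div_pos hq0 hd))).symm]
      exact Real.sqrt_lt_sqrt (sq_nonneg _) hNlarge
    rw [hδdef, div_lt_iff₀ hsqrtN]
    rw [div_lt_iff₀ hd] at h1
    linarith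
  have hδ0 : 0 < δ := div_pos hq0 hsqrtN
  have hlt : ε₁ + ε₂ + δ < ε := by linarith
  -- pick witness points for bad candidates
  have hx : ∀ i : Fin m,
      ε < (⨆ x : ℝ, |(ν i (Set.Iic x)).toReal - (μ (Set.Iic x)).toReal|) →
      ∃ x, ε₁ + ε₂ + δ < |(ν i (Set.Iic x)).toReal - (μ (Set.Iic x)).toReal| :=
    fun i h => exists_lt_of_lt_ciSup (lt_trans hlt h)
  classical
  set xi : Fin m → ℝ := fun i =>
    if h : ε < (⨆ x : ℝ, |(ν i (Set.Iic x)).toReal - (μ (Set.Iic x)).toReal|)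
    then (hx i h).choose else 0 with hxidef
  have hxi : ∀ i, ε < (⨆ x : ℝ, |(ν i (Set.Iic x)).toReal - (μ (Set.Iic x)).toReal|) →
      ε₁ + ε₂ + δ < |(ν i (Set.Iic (xi i))).toReal - (μ (Set.Iic (xi i))).toReal| := by
    intro i h
    rw [hxidef]
    simp only [dif_pos h]
    exact (hx i h).choose_spec
  set A : Fin m → Set Ω := fun i =>
    {ω | ε₁ < |ecdfFin (Y i) ω (xi i) - (ν i (Set.Iic (xi i))).toReal|} with hAdef
  set B : Fin m → Set Ω := fun i =>
    {ω | ε₂ < |ecdfFin X ω (xi i) - (μ (Set.Iic (xi i))).toReal|} with hBdef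
  have hsub : {ω | ∃ i : Fin m,
      ε < (⨆ x : ℝ, |(ν i (Set.Iic x)).toReal - (μ (Set.Iic x)).toReal|) ∧
      (⨆ x : ℝ, |ecdfFin (Y i) ω x - ecdfFin X ω x|) ≤ δ} ⊆ ⋃ i, A i ∪ B i := by
    rintro ω ⟨i, hbad, hsup⟩
    refine Set.mem_iUnion.mpr ⟨i, ?_⟩
    have hbdd : BddAbove (Set.range fun x => |ecdfFin (Y i) ω x - ecdfFin X ω x|) := by
      refine ⟨1, ?_⟩
      rintro _ ⟨x, rfl⟩
      obtain ⟨h1, h2⟩ := ecdf_mem (Y i) ω x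
      obtain ⟨h3, h4⟩ := ecdf_mem X ω x
      rw [abs_sub_le_iff]
      constructor <;> linarith
    have hpoint : |ecdfFin (Y i) ω (xi i) - ecdfFin X ω (xi i)| ≤ δ :=
      le_trans (le_ciSup hbdd (xi i)) hsup
    by_contra hno
    rw [Set.mem_union] at hno
    push_neg at hno
    obtain ⟨hnA, hnB⟩ := hno
    rw [hAdef, Set.mem_setOf_eq, not_lt] at hnA
    rw [hBdef, Set.mem_setOf_eq, not_lt] at hnB
    have htri := hxi i hbad
    set a := (ν i (Set.Iic (xi i))).toReal
    set b := (μ (Set.Iic (xi i))).toReal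
    set c := ecdfFin (Y i) ω (xi i)
    set d := ecdfFin X ω (xi i)
    have t1 : |a - b| ≤ |a - c| + |c - b| := abs_sub_le a c b
    have t2 : |c - b| ≤ |c - d| + |d - b| := abs_sub_le c d b
    have t3 : |a - c| = |c - a| := abs_sub_comm a c
    linarith [hnA, hnB, hpoint, t1, t2]
  -- bound each piece
  have hA : ∀ i, Pr (A i) ≤ ENNReal.ofReal (2 * exp (-2 * n * ε₁ ^ 2)) := by
    intro i
    refine ecdf_dev Pr hn0 (hYm i) ?_ (xi i) ?_ ε₁ hε₁
    · have := iIndepFun_precomp hindep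
        (g := fun j : Fin n => (Sum.inr (i, j) : Fin N ⊕ (Fin m × Fin n)))
        (fun a b hab => by simpa using hab)
      exact this
    · intro j
      rw [← Measure.map_apply (hYm i j) measurableSet_Iic, hY i j]
  have hB : ∀ i, Pr (B i) ≤ ENNReal.ofReal (2 * exp (-2 * N * ε₂ ^ 2)) := by
    intro i
    refine ecdf_dev Pr hN0 hXm ?_ (xi i) ?_ ε₂ hε₂
    · have := iIndepFun_precomp hindep
        (g := fun k : Fin N => (Sum.inl k : Fin N ⊕ (Fin m × Fin n)))
        (fun a b hab => by simpa using hab)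
      exact this
    · intro k
      rw [← Measure.map_apply (hXm k) measurableSet_Iic, hX k]
  have hbound : Pr {ω | ∃ i : Fin m,
      ε < (⨆ x : ℝ, |(ν i (Set.Iic x)).toReal - (μ (Set.Iic x)).toReal|) ∧
      (⨆ x : ℝ, |ecdfFin (Y i) ω x - ecdfFin X ω x|) ≤ δ} ≤
      ENNReal.ofReal (2 * m * (exp (-2 * n * ε₁ ^ 2) + exp (-2 * N * ε₂ ^ 2))) := by
    calc Pr _ ≤ Pr (⋃ i, A i ∪ B i) := measure_mono hsub
    _ ≤ ∑' i : Fin m, Pr (A i ∪ B i) := measure_iUnion_le _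
    _ = ∑ i : Fin m, Pr (A i ∪ B i) := tsum_fintype _
    _ ≤ ∑ i : Fin m, (ENNReal.ofReal (2 * exp (-2 * n * ε₁ ^ 2)) +
          ENNReal.ofReal (2 * exp (-2 * N * ε₂ ^ 2))) := by
        refine Finset.sum_le_sum fun i _ => ?_
        calc Pr (A i ∪ B i) ≤ Pr (A i) + Pr (B i) := measure_union_le _ _
        _ ≤ _ := add_le_add (hA i) (hB i)
    _ = ENNReal.ofReal (2 * m * (exp (-2 * n * ε₁ ^ 2) + exp (-2 * N * ε₂ ^ 2))) := by
        rw [Finset.sum_const, Finset.card_univ, Fintype.card_fin,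
          ← ENNReal.ofReal_add (by positivity) (by positivity)]
        rw [nsmul_eq_mul, ← ENNReal.ofReal_natCast m,
          ← ENNReal.ofReal_mul (by positivity)]
        congr 1
        ring
  exact ENNReal.toReal_le_of_le_ofReal (by positivity) hbound
end

section
/- Let 𝓔̂_m = { θ_i : sup_{x∈ℝ} |F_n^{θ_i}(x) − F_N^{θ₀}(x)| ≤ q_{1−α}/√N } be the eligibility set constructed from an i.i.d. real sample of size N from F^{θ₀}, independent i.i.d. simulated samples of size n from each F^{θ_i}, and candidates θ₁,…,θ_m. If log m = o(N) and n = Ω(N) as N → ∞, then for any ε > 0, lim_{m,n,N→∞} ℙ( ∃ i ∈ {1,…,m} such that sup_{x∈ℝ} |F^{θ_i}(x) − F^{θ₀}(x)| > ε and θ_i ∈ 𝓔̂_m ) = 0. -/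
open MeasureTheory ProbabilityTheory Filter

/-- Empirical distribution function of the first `M` terms of a sequence of
real-valued random variables. -/
noncomputable def ecdfSeq {Ω : Type*} (Z : ℕ → Ω → ℝ) (M : ℕ) (ω : Ω) (x : ℝ) : ℝ :=
  (M : ℝ)⁻¹ * ∑ i ∈ Finset.range M, if Z i ω ≤ x then (1 : ℝ) else 0

lemma indep_precomp {Ω ι κ : Type*} [MeasurableSpace Ω] {μ : Measure Ω} [Nonempty κ]
    {f : ι → Ω → ℝ} (hf : iIndepFun f μ)
    {g : κ → ι} (hg : Function.Injective g) :
    iIndepFun (fun k => f (g k)) μ := by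
  classical
  rw [iIndepFun_iff_measure_inter_preimage_eq_mul] at hf ⊢
  intro S sets hsets
  have hinv : ∀ k : κ, Function.invFun g (g k) = k := fun k =>
    Function.leftInverse_invFun hg k
  have h := hf (S.image g) (sets := fun i => sets (Function.invFun g i)) ?_
  · have h1 : (⋂ i ∈ S.image g, f i ⁻¹' sets (Function.invFun g i))
        = ⋂ k ∈ S, f (g k) ⁻¹' sets k := by
      rw [Finset.set_biInter_finset_image]
      exact Set.iInter₂_congr fun k _ => by rw [hinv]
    have h2 : (∏ i ∈ S.image g, μ (f i ⁻¹' sets (Function.invFun g i)))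
        = ∏ k ∈ S, μ (f (g k) ⁻¹' sets k) := by
      rw [Finset.prod_image (fun a _ b _ hab => hg hab)]
      simp only [hinv]
    rw [h1, h2] at h
    exact h
  · intro i hi
    rcases Finset.mem_image.1 hi with ⟨k, hk, rfl⟩
    simpa [hinv] using hsets k hk

lemma chernoff_upper {Ω : Type*} [MeasurableSpace Ω] (Pr : Measure Ω) [IsProbabilityMeasure Pr]
    (Z : ℕ → Ω → ℝ) (hZm : ∀ j, Measurable (Z j))
    (hind : iIndepFun Z Pr)
    (ρ : Measure ℝ) [IsProbabilityMeasure ρ] (hZd : ∀ j, Measure.map (Z j) Pr = ρ)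
    (B : Set ℝ) (hB : MeasurableSet B) (M : ℕ) (δ : ℝ) (hδ0 : 0 < δ) (hδ1 : δ ≤ 1) :
    (Pr {ω | (ρ B).toReal + δ ≤
        (M : ℝ)⁻¹ * ∑ j ∈ Finset.range M, B.indicator (fun _ => (1:ℝ)) (Z j ω)}).toReal
      ≤ Real.exp (-(M : ℝ) * δ ^ 2 / 4) := by
  classical
  set p : ℝ := (ρ B).toReal with hp
  have hp0 : 0 ≤ p := ENNReal.toReal_nonneg
  have hp1 : p ≤ 1 := by
    rw [hp]
    exact ENNReal.toReal_le_of_le_ofReal one_pos.le (by simpa using prob_le_one (μ := ρ) (s := B))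
  rcases Nat.eq_zero_or_pos M with hM | hM
  · subst hM
    have : {ω : Ω | p + δ ≤ ((0:ℕ) : ℝ)⁻¹ * ∑ j ∈ Finset.range 0,
        B.indicator (fun _ => (1:ℝ)) (Z j ω)} = ∅ := by
      ext ω; simp only [Finset.range_zero, Finset.sum_empty, mul_zero, Set.mem_setOf_eq]
      constructor
      · intro h; exfalso; nlinarith
      · exact fun h => h.elim
    rw [this]
    simp [Real.exp_nonneg]
  -- main case
  set t : ℝ := δ / 2 with htdef
  have ht0 : 0 ≤ t := by positivity
  have ht1 : t ≤ 1 := by rw [htdef]; linarith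
  set g : ℝ → ℝ := B.indicator (fun _ => (1:ℝ)) with hg
  have hgm : Measurable g := measurable_const.indicator hB
  set W : ℕ → Ω → ℝ := fun j => g ∘ Z j with hW
  have hWm : ∀ j, Measurable (W j) := fun j => hgm.comp (hZm j)
  have hWind : iIndepFun W Pr :=
    hind.comp (fun _ => g) (fun _ => hgm)
  have hW01 : ∀ j ω, 0 ≤ W j ω ∧ W j ω ≤ 1 := by
    intro j ω
    simp only [hW, hg, Function.comp_apply, Set.indicator_apply]
    split <;> norm_num
  set S : Ω → ℝ := fun ω => ∑ j ∈ Finset.range M, W j ω with hS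
  have hSfun : S = ∑ j ∈ Finset.range M, W j := by
    funext ω; simp [hS, Finset.sum_apply]
  have hSm : Measurable S := by
    rw [hS]; exact Finset.measurable_sum _ (fun j _ => hWm j)
  have hSapp : ∀ ω, S ω = ∑ j ∈ Finset.range M, W j ω := fun ω => rfl
  have hS0 : ∀ ω, 0 ≤ S ω := fun ω => by
    rw [hSapp]; exact Finset.sum_nonneg fun j _ => (hW01 j ω).1
  have hSM : ∀ ω, S ω ≤ M := fun ω => by
    rw [hSapp]
    calc ∑ j ∈ Finset.range M, W j ω ≤ ∑ _j ∈ Finset.range M, (1:ℝ) :=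
          Finset.sum_le_sum fun j _ => (hW01 j ω).2
      _ = M := by simp
  -- integrability of exp (t * S)
  have hint : Integrable (fun ω => Real.exp (t * S ω)) Pr := by
    refine Integrable.mono' (integrable_const (Real.exp (t * M)))
      ((hSm.const_mul t).exp.aestronglyMeasurable) ?_
    filter_upwards with ω
    rw [Real.norm_eq_abs, abs_of_pos (Real.exp_pos _), Real.exp_le_exp]
    exact mul_le_mul_of_nonneg_left (hSM ω) ht0
  -- mgf of each W j
  have hmgfW : ∀ j, mgf (W j) Pr t = 1 + p * (Real.exp t - 1) := by
    intro j
    have hfun : (fun ω => Real.exp (t * W j ω))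
        = fun ω => (Real.exp t - 1) * W j ω + 1 := by
      funext ω
      simp only [hW, hg, Function.comp_apply, Set.indicator_apply]
      split
      · simp
      · simp
    have hWint : Integrable (W j) Pr := by
      refine Integrable.mono' (integrable_const (1:ℝ)) (hWm j).aestronglyMeasurable ?_
      filter_upwards with ω
      rw [Real.norm_eq_abs, abs_of_nonneg (hW01 j ω).1]
      exact (hW01 j ω).2
    have hWint2 : ∫ ω, W j ω ∂Pr = p := by
      have hWeq : W j = Set.indicator ((Z j) ⁻¹' B) (fun _ => (1:ℝ)) := by
        funext ω
        simp only [hW, hg, Function.comp_apply, Set.indicator_apply, Set.mem_preimage]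
      rw [hWeq, MeasureTheory.integral_indicator_const (1:ℝ) ((hZm j) hB)]
      rw [measureReal_def, ← Measure.map_apply (hZm j) hB, hZd j, hp]
      simp
    rw [mgf, hfun, integral_add ((hWint.const_mul _)) (integrable_const 1),
      integral_const_mul, hWint2]
    simp [measure_univ]
    ring
  have hmgfS : mgf S Pr t = (1 + p * (Real.exp t - 1)) ^ M := by
    rw [hSfun, hWind.mgf_sum hWm]
    simp [hmgfW]
  -- Chernoff
  have hch := measure_ge_le_exp_mul_mgf (μ := Pr) (X := S) (t := t) ((M : ℝ) * (p + δ)) ht0 hint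
  rw [hmgfS] at hch
  have hsetEq : {ω : Ω | p + δ ≤ (M : ℝ)⁻¹ * ∑ j ∈ Finset.range M,
      B.indicator (fun _ => (1:ℝ)) (Z j ω)} = {ω | (M : ℝ) * (p + δ) ≤ S ω} := by
    ext ω
    have hMpos : (0:ℝ) < M := by exact_mod_cast hM
    have : (M : ℝ)⁻¹ * ∑ j ∈ Finset.range M, B.indicator (fun _ => (1:ℝ)) (Z j ω) = S ω / M := by
      rw [hSapp]
      simp only [hW, hg, Function.comp_apply]
      ring
    simp only [Set.mem_setOf_eq, this, le_div_iff₀ hMpos]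
    constructor <;> intro h <;> linarith
  rw [hsetEq]
  refine hch.trans ?_
  have hbase0 : (0:ℝ) ≤ 1 + p * (Real.exp t - 1) := by
    have : (1:ℝ) ≤ Real.exp t := Real.one_le_exp ht0
    nlinarith
  have hpowle : (1 + p * (Real.exp t - 1)) ^ M ≤ Real.exp (p * (Real.exp t - 1)) ^ M := by
    apply pow_le_pow_left₀ hbase0
    have := Real.add_one_le_exp (p * (Real.exp t - 1))
    linarith
  calc Real.exp (-t * ((M:ℝ) * (p + δ))) * (1 + p * (Real.exp t - 1)) ^ M
      ≤ Real.exp (-t * ((M:ℝ) * (p + δ))) * Real.exp (p * (Real.exp t - 1)) ^ M := by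
        exact mul_le_mul_of_nonneg_left hpowle (Real.exp_nonneg _)
    _ = Real.exp (-t * ((M:ℝ) * (p + δ)) + (M:ℝ) * (p * (Real.exp t - 1))) := by
        rw [← Real.exp_nat_mul, ← Real.exp_add]
    _ ≤ Real.exp (-(M:ℝ) * δ ^ 2 / 4) := by
        rw [Real.exp_le_exp]
        have hexpt : Real.exp t - 1 - t ≤ t ^ 2 := by
          have h := Real.abs_exp_sub_one_sub_id_le (x := t) (by rw [abs_of_nonneg ht0]; exact ht1)
          have := (abs_le.1 h).2
          nlinarith [sq_abs t]
        have hexpt0 : 0 ≤ Real.exp t - 1 - t := by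
          have := Real.add_one_le_exp t; linarith
        have hM1 : (1:ℝ) ≤ M := by exact_mod_cast hM
        have key : p * (Real.exp t - 1) - t * (p + δ) ≤ -(δ ^ 2) / 4 := by
          have h1 : p * (Real.exp t - 1 - t) ≤ t ^ 2 := by
            calc p * (Real.exp t - 1 - t) ≤ 1 * (Real.exp t - 1 - t) :=
                  mul_le_mul_of_nonneg_right hp1 hexpt0
              _ ≤ t ^ 2 := by linarith
          have ht2 : t ^ 2 - t * δ = -(δ ^ 2) / 4 := by rw [htdef]; ring
          nlinarith
        nlinarith [key, hM1, sq_nonneg δ]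

lemma dev_bound {Ω : Type*} [MeasurableSpace Ω] (Pr : Measure Ω) [IsProbabilityMeasure Pr]
    (Z : ℕ → Ω → ℝ) (hZm : ∀ j, Measurable (Z j))
    (hind : iIndepFun Z Pr)
    (ρ : Measure ℝ) [IsProbabilityMeasure ρ] (hZd : ∀ j, Measure.map (Z j) Pr = ρ)
    (x : ℝ) (M : ℕ) (hM : 0 < M) (δ : ℝ) (hδ0 : 0 < δ) (hδ1 : δ ≤ 1) :
    (Pr {ω | δ ≤ |ecdfSeq Z M ω x - (ρ (Set.Iic x)).toReal|}).toReal
      ≤ 2 * Real.exp (-(M : ℝ) * δ ^ 2 / 4) := by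
  classical
  set p : ℝ := (ρ (Set.Iic x)).toReal with hp
  have hMpos : (0:ℝ) < M := by exact_mod_cast hM
  set A : Set Ω := {ω | p + δ ≤ (M : ℝ)⁻¹ * ∑ j ∈ Finset.range M,
      (Set.Iic x).indicator (fun _ => (1:ℝ)) (Z j ω)} with hA
  set B' : Set Ω := {ω | (ρ (Set.Iic x)ᶜ).toReal + δ ≤ (M : ℝ)⁻¹ * ∑ j ∈ Finset.range M,
      ((Set.Iic x)ᶜ).indicator (fun _ => (1:ℝ)) (Z j ω)} with hB'
  have hecdf : ∀ ω, ecdfSeq Z M ω x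
      = (M : ℝ)⁻¹ * ∑ j ∈ Finset.range M, (Set.Iic x).indicator (fun _ => (1:ℝ)) (Z j ω) := by
    intro ω
    unfold ecdfSeq
    have hterm0 : ∀ j ∈ Finset.range M, (if Z j ω ≤ x then (1:ℝ) else 0)
        = (Set.Iic x).indicator (fun _ => (1:ℝ)) (Z j ω) := by
      intro j _
      by_cases h : Z j ω ≤ x <;> simp [Set.indicator_apply, Set.mem_Iic, h]
    rw [Finset.sum_congr rfl hterm0]
  have hcompl : ∀ ω, (M : ℝ)⁻¹ * ∑ j ∈ Finset.range M,
      ((Set.Iic x)ᶜ).indicator (fun _ => (1:ℝ)) (Z j ω) = 1 - ecdfSeq Z M ω x := by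
    intro ω
    have hterm : ∀ j, ((Set.Iic x)ᶜ).indicator (fun _ => (1:ℝ)) (Z j ω)
        = 1 - (Set.Iic x).indicator (fun _ => (1:ℝ)) (Z j ω) := by
      intro j
      by_cases h : Z j ω ≤ x
      · rw [Set.indicator_of_notMem (by simp [h]), Set.indicator_of_mem (by simp [h])]
        norm_num
      · have h' : x < Z j ω := lt_of_not_ge h
        rw [Set.indicator_of_mem (by simpa using h'), Set.indicator_of_notMem (by simpa using h)]
        norm_num
    rw [Finset.sum_congr rfl (fun j _ => hterm j), Finset.sum_sub_distrib, hecdf]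
    simp only [Finset.sum_const, Finset.card_range, nsmul_eq_mul, mul_one]
    field_simp
  have hpc : (ρ (Set.Iic x)ᶜ).toReal = 1 - p := by
    rw [prob_compl_eq_one_sub measurableSet_Iic,
      ENNReal.toReal_sub_of_le prob_le_one ENNReal.one_ne_top]
    simp [hp]
  have hsub : {ω | δ ≤ |ecdfSeq Z M ω x - p|} ⊆ A ∪ B' := by
    intro ω hω
    rw [Set.mem_setOf_eq] at hω
    rcases le_abs.1 hω with h | h
    · left
      rw [hA, Set.mem_setOf_eq, ← hecdf]
      linarith
    · right
      rw [hB', Set.mem_setOf_eq, hcompl, hpc]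
      rw [neg_sub] at h
      linarith
  calc (Pr {ω | δ ≤ |ecdfSeq Z M ω x - p|}).toReal
      ≤ (Pr (A ∪ B')).toReal :=
        ENNReal.toReal_mono (measure_ne_top _ _) (measure_mono hsub)
    _ ≤ (Pr A).toReal + (Pr B').toReal := by
        rw [← ENNReal.toReal_add (measure_ne_top _ _) (measure_ne_top _ _)]
        exact ENNReal.toReal_mono
          (ENNReal.add_ne_top.2 ⟨measure_ne_top _ _, measure_ne_top _ _⟩)
          (measure_union_le _ _)
    _ ≤ Real.exp (-(M : ℝ) * δ ^ 2 / 4) + Real.exp (-(M : ℝ) * δ ^ 2 / 4) := by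
        gcongr
        · exact chernoff_upper Pr Z hZm hind ρ hZd (Set.Iic x) measurableSet_Iic M δ hδ0 hδ1
        · exact chernoff_upper Pr Z hZm hind ρ hZd (Set.Iic x)ᶜ measurableSet_Iic.compl M δ
            hδ0 hδ1
    _ = 2 * Real.exp (-(M : ℝ) * δ ^ 2 / 4) := by ring

lemma ecdf_mem_Icc {Ω : Type*} (Z : ℕ → Ω → ℝ) (M : ℕ) (ω : Ω) (x : ℝ) :
    0 ≤ ecdfSeq Z M ω x ∧ ecdfSeq Z M ω x ≤ 1 := by
  unfold ecdfSeq
  constructor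
  · apply mul_nonneg (by positivity)
    apply Finset.sum_nonneg
    intro j _
    split <;> norm_num
  · rcases Nat.eq_zero_or_pos M with h | h
    · subst h; simp
    · have hMpos : (0:ℝ) < M := by exact_mod_cast h
      have hsum : ∑ j ∈ Finset.range M, (if Z j ω ≤ x then (1:ℝ) else 0) ≤ M := by
        calc ∑ j ∈ Finset.range M, (if Z j ω ≤ x then (1:ℝ) else 0)
            ≤ ∑ _j ∈ Finset.range M, (1:ℝ) := by
              apply Finset.sum_le_sum; intro j _; split <;> norm_num
          _ = M := by simp
      calc (M : ℝ)⁻¹ * ∑ j ∈ Finset.range M, (if Z j ω ≤ x then (1:ℝ) else 0)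
          ≤ (M : ℝ)⁻¹ * M := by
            exact mul_le_mul_of_nonneg_left hsum (by positivity)
        _ = 1 := by field_simp

lemma exp_neg_tendsto (s : ℝ) (hs : 0 < s) :
    Tendsto (fun N : ℕ => Real.exp (-((N : ℝ) * s))) atTop (nhds 0) := by
  apply Real.tendsto_exp_atBot.comp
  apply tendsto_neg_atBot_iff.2
  exact Tendsto.atTop_mul_const hs tendsto_natCast_atTop_atTop


/-- **Corollary 1.** If `log m = o(N)` and `n = Ω(N)`, then for any `ε > 0` the probability
that some candidate `θᵢ` with `sup_x |F^{θᵢ}(x) - F^{θ₀}(x)| > ε` lies in the eligibility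
set `𝓔̂_m` tends to `0` as `m, n, N → ∞`. -/
theorem stmt_5
    {Ω : Type*} [MeasurableSpace Ω] (Pr : Measure Ω) [IsProbabilityMeasure Pr]
    (μ : Measure ℝ) [IsProbabilityMeasure μ]
    (ν : ℕ → Measure ℝ) [∀ i, IsProbabilityMeasure (ν i)]
    (X : ℕ → Ω → ℝ) (Y : ℕ → ℕ → Ω → ℝ)
    (hXm : ∀ i, Measurable (X i)) (hYm : ∀ i j, Measurable (Y i j))
    (hindep : iIndepFun
      (Sum.elim X (fun p : ℕ × ℕ => Y p.1 p.2)) Pr)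
    (hX : ∀ k, Measure.map (X k) Pr = μ) (hY : ∀ i j, Measure.map (Y i j) Pr = ν i)
    (α : ℝ) (hα : α ∈ Set.Ioo (0 : ℝ) 1)
    (q : ℝ) (hq0 : 0 < q)
    (hq : 2 * ∑' v : ℕ, (-1 : ℝ) ^ v * Real.exp (-2 * ((v : ℝ) + 1) ^ 2 * q ^ 2) = α)
    (m n : ℕ → ℕ)
    (hm : Tendsto m atTop atTop) (hn : Tendsto n atTop atTop)
    -- `log m = o(N)`
    (hlogm : Tendsto (fun N => Real.log (m N) / (N : ℝ)) atTop (nhds 0))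
    -- `n = Ω(N)`
    (hnN : ∃ c > (0 : ℝ), ∀ᶠ N : ℕ in atTop, c * (N : ℝ) ≤ (n N : ℝ))
    (ε : ℝ) (hε : 0 < ε) :
    Tendsto (fun N =>
      (Pr {ω | ∃ i < m N,
        ε < (⨆ x : ℝ, |(ν i (Set.Iic x)).toReal - (μ (Set.Iic x)).toReal|) ∧
        (⨆ x : ℝ, |ecdfSeq (Y i) (n N) ω x - ecdfSeq X N ω x|) ≤ q / Real.sqrt N}).toReal)
      atTop (nhds 0) := by
  classical
  obtain ⟨c, hc0, hcev⟩ := hnN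
  set δ : ℝ := min (ε/3) (1/2) with hδdef
  have hδ0 : 0 < δ := lt_min (by linarith) (by norm_num)
  have hδ1 : δ ≤ 1 := le_trans (min_le_right _ _) (by norm_num)
  have h3δ : 3 * δ ≤ ε := by
    have h := min_le_left (ε/3) (1/2)
    rw [hδdef]; linarith
  have hle1 : ∀ (ρ : Measure ℝ) (s : Set ℝ), IsProbabilityMeasure ρ → (ρ s).toReal ≤ 1 := by
    intro ρ s hρ
    have h : ρ s ≤ 1 := prob_le_one
    exact ENNReal.toReal_le_of_le_ofReal one_pos.le (by simpa using h)
  have hbdd : ∀ i, BddAbove (Set.range fun x : ℝ =>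
      |(ν i (Set.Iic x)).toReal - (μ (Set.Iic x)).toReal|) := by
    intro i
    refine ⟨1, ?_⟩
    rintro r ⟨x, rfl⟩
    have h1 := hle1 (ν i) (Set.Iic x) inferInstance
    have h2 := hle1 μ (Set.Iic x) inferInstance
    have h3 : (0:ℝ) ≤ (ν i (Set.Iic x)).toReal := ENNReal.toReal_nonneg
    have h4 : (0:ℝ) ≤ (μ (Set.Iic x)).toReal := ENNReal.toReal_nonneg
    rw [abs_sub_le_iff]
    constructor <;> [linarith; linarith]
  set P : ℕ → Prop := fun i =>
    ∃ x : ℝ, ε < |(ν i (Set.Iic x)).toReal - (μ (Set.Iic x)).toReal| with hPdef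
  set xi : ℕ → ℝ := fun i => if h : P i then h.choose else 0 with hxidef
  have hxi : ∀ i, P i →
      ε < |(ν i (Set.Iic (xi i))).toReal - (μ (Set.Iic (xi i))).toReal| := by
    intro i hPi
    simp only [hxidef, dif_pos hPi]
    exact hPi.choose_spec
  have hindX : iIndepFun X Pr :=
    indep_precomp hindep Sum.inl_injective
  have hindY : ∀ i, iIndepFun (Y i) Pr :=
    fun i => indep_precomp hindep (g := fun j => Sum.inr (i, j))
      (fun a b hab => by simpa using hab)
  set g : ℕ → ℝ := fun N => (m N : ℝ) * (2 * Real.exp (-(n N : ℝ) * δ^2/4)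
    + 2 * Real.exp (-(N : ℝ) * δ^2/4)) with hgdef
  have hqδ : ∀ᶠ N : ℕ in atTop, q / Real.sqrt N ≤ δ := by
    have hev : ∀ᶠ N : ℕ in atTop, ((q/δ)^2 : ℝ) ≤ (N : ℝ) :=
      tendsto_natCast_atTop_atTop.eventually_ge_atTop _
    filter_upwards [hev, eventually_gt_atTop 0] with N hN hN0
    have hN0' : (0:ℝ) < N := by exact_mod_cast hN0
    have hsq : q / δ ≤ Real.sqrt N := by
      rw [Real.le_sqrt (by positivity) hN0'.le]
      exact hN
    have hsqrtpos : 0 < Real.sqrt N := Real.sqrt_pos.2 hN0'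
    rw [div_le_iff₀ hsqrtpos]
    rw [div_le_iff₀ hδ0] at hsq
    nlinarith
  have key : ∀ᶠ N : ℕ in atTop,
      (Pr {ω | ∃ i < m N,
        ε < (⨆ x : ℝ, |(ν i (Set.Iic x)).toReal - (μ (Set.Iic x)).toReal|) ∧
        (⨆ x : ℝ, |ecdfSeq (Y i) (n N) ω x - ecdfSeq X N ω x|) ≤ q / Real.sqrt N}).toReal
        ≤ g N := by
    filter_upwards [hqδ, hn.eventually_gt_atTop 0, eventually_gt_atTop 0] with N hqN hn0 hN0
    set EY : ℕ → Set Ω := fun i =>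
      {ω | δ ≤ |ecdfSeq (Y i) (n N) ω (xi i) - (ν i (Set.Iic (xi i))).toReal|} with hEY
    set EX : ℕ → Set Ω := fun i =>
      {ω | δ ≤ |ecdfSeq X N ω (xi i) - (μ (Set.Iic (xi i))).toReal|} with hEX
    have hEsub : {ω | ∃ i < m N,
        ε < (⨆ x : ℝ, |(ν i (Set.Iic x)).toReal - (μ (Set.Iic x)).toReal|) ∧
        (⨆ x : ℝ, |ecdfSeq (Y i) (n N) ω x - ecdfSeq X N ω x|) ≤ q / Real.sqrt N}
          ⊆ ⋃ i ∈ Finset.range (m N), (EY i ∪ EX i) := by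
      intro ω hω
      rw [Set.mem_setOf_eq] at hω
      obtain ⟨i, him, hbad, hKS⟩ := hω
      have hPi : P i := by
        obtain ⟨x, hx⟩ := (lt_ciSup_iff (hbdd i)).1 hbad
        exact ⟨x, hx⟩
      have hxspec := hxi i hPi
      have hbdd2 : BddAbove (Set.range fun x : ℝ =>
          |ecdfSeq (Y i) (n N) ω x - ecdfSeq X N ω x|) := by
        refine ⟨2, ?_⟩
        rintro r ⟨x, rfl⟩
        have h1 := ecdf_mem_Icc (Y i) (n N) ω x
        have h2 := ecdf_mem_Icc X N ω x
        rw [abs_sub_le_iff]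
        constructor <;> [linarith; linarith]
      have hmid : |ecdfSeq (Y i) (n N) ω (xi i) - ecdfSeq X N ω (xi i)| ≤ δ :=
        le_trans (le_trans (le_ciSup hbdd2 (xi i)) hKS) hqN
      have t1 := abs_sub_le ((ν i (Set.Iic (xi i))).toReal)
        (ecdfSeq (Y i) (n N) ω (xi i)) ((μ (Set.Iic (xi i))).toReal)
      have t2 := abs_sub_le (ecdfSeq (Y i) (n N) ω (xi i))
        (ecdfSeq X N ω (xi i)) ((μ (Set.Iic (xi i))).toReal)
      have hor : δ ≤ |ecdfSeq (Y i) (n N) ω (xi i) - (ν i (Set.Iic (xi i))).toReal|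
          ∨ δ ≤ |ecdfSeq X N ω (xi i) - (μ (Set.Iic (xi i))).toReal| := by
        by_contra hcon
        push_neg at hcon
        obtain ⟨hc1, hc2⟩ := hcon
        have hc1' : |(ν i (Set.Iic (xi i))).toReal - ecdfSeq (Y i) (n N) ω (xi i)| < δ := by
          rwa [abs_sub_comm]
        linarith
      apply Set.mem_biUnion (Finset.mem_range.2 him)
      rcases hor with h | h
      · exact Or.inl h
      · exact Or.inr h
    calc (Pr {ω | ∃ i < m N,
        ε < (⨆ x : ℝ, |(ν i (Set.Iic x)).toReal - (μ (Set.Iic x)).toReal|) ∧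
        (⨆ x : ℝ, |ecdfSeq (Y i) (n N) ω x - ecdfSeq X N ω x|) ≤ q / Real.sqrt N}).toReal
        ≤ (Pr (⋃ i ∈ Finset.range (m N), (EY i ∪ EX i))).toReal :=
          ENNReal.toReal_mono (measure_ne_top _ _) (measure_mono hEsub)
      _ ≤ ∑ i ∈ Finset.range (m N), (Pr (EY i ∪ EX i)).toReal := by
          rw [← ENNReal.toReal_sum (fun i _ => measure_ne_top _ _)]
          exact ENNReal.toReal_mono
            ((ENNReal.sum_lt_top.2 fun i _ => measure_lt_top _ _).ne)
            (measure_biUnion_finset_le _ _)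
      _ ≤ ∑ _i ∈ Finset.range (m N),
            (2 * Real.exp (-(n N : ℝ) * δ^2/4) + 2 * Real.exp (-(N : ℝ) * δ^2/4)) := by
          apply Finset.sum_le_sum
          intro i _
          calc (Pr (EY i ∪ EX i)).toReal ≤ (Pr (EY i)).toReal + (Pr (EX i)).toReal := by
                rw [← ENNReal.toReal_add (measure_ne_top _ _) (measure_ne_top _ _)]
                exact ENNReal.toReal_mono
                  (ENNReal.add_ne_top.2 ⟨measure_ne_top _ _, measure_ne_top _ _⟩)
                  (measure_union_le _ _)
            _ ≤ 2 * Real.exp (-(n N : ℝ) * δ^2/4) + 2 * Real.exp (-(N : ℝ) * δ^2/4) := by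
                gcongr
                · exact dev_bound Pr (Y i) (hYm i) (hindY i) (ν i) (hY i) (xi i) (n N)
                    hn0 δ hδ0 hδ1
                · exact dev_bound Pr X hXm hindX μ hX (xi i) N hN0 δ hδ0 hδ1
      _ = g N := by
          rw [Finset.sum_const, Finset.card_range, nsmul_eq_mul, hgdef]
  have haux : ∀ (a : ℕ → ℕ) (r : ℝ), 0 < r → (∀ᶠ N : ℕ in atTop, r * (N:ℝ) ≤ (a N : ℝ)) →
      Tendsto (fun N => (m N : ℝ) * Real.exp (-(a N : ℝ) * δ^2/4)) atTop (nhds 0) := by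
    intro a r hr hev
    refine squeeze_zero' (by filter_upwards with N; positivity) ?_
      (exp_neg_tendsto (r * δ^2/8) (by positivity))
    filter_upwards [hev, hm.eventually_ge_atTop 1, eventually_gt_atTop 0,
      hlogm.eventually_lt_const (show (0:ℝ) < r * δ^2/8 by positivity)]
      with N hevN hm1 hN0 hlog
    have hm1' : (1:ℝ) ≤ m N := by exact_mod_cast hm1
    have hN0' : (0:ℝ) < N := by exact_mod_cast hN0
    have hlogle : Real.log (m N) ≤ (N:ℝ) * (r * δ^2/8) := by
      rw [div_lt_iff₀ hN0'] at hlog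
      linarith
    calc (m N : ℝ) * Real.exp (-(a N : ℝ) * δ^2/4)
        ≤ (m N : ℝ) * Real.exp (-(r * (N:ℝ)) * δ^2/4) := by
          apply mul_le_mul_of_nonneg_left _ (by linarith)
          rw [Real.exp_le_exp]
          nlinarith [hevN, sq_nonneg δ]
      _ = Real.exp (Real.log (m N) + (-(r * (N:ℝ)) * δ^2/4)) := by
          rw [Real.exp_add, Real.exp_log (by linarith)]
      _ ≤ Real.exp (-((N:ℝ) * (r * δ^2/8))) := by
          rw [Real.exp_le_exp]
          nlinarith [hlogle, hN0']
  have hA := haux n c hc0 hcev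
  have hB := haux (fun N => N) 1 one_pos (by filter_upwards with N; simp)
  have hg0 : Tendsto g atTop (nhds 0) := by
    have hgeq : g = fun N => 2 * ((m N:ℝ) * Real.exp (-(n N:ℝ) * δ^2/4))
        + 2 * ((m N:ℝ) * Real.exp (-(N:ℝ) * δ^2/4)) := by
      funext N; rw [hgdef]; ring
    rw [hgeq]
    have h := (hA.const_mul 2).add (hB.const_mul 2)
    simpa using h
  exact squeeze_zero' (by filter_upwards with N; exact ENNReal.toReal_nonneg) key hg0
end

section
/- Let 𝓔̂_m = { θ_i : sup_{x∈ℝ} |F_n^{θ_i}(x) − F_N^{θ₀}(x)| ≤ q_{1−α}/√N } be the eligibility set constructed from an i.i.d. real sample of size N from F^{θ₀}, independent i.i.d. simulated samples of size n from each F^{θ_i}, and candidates θ₁,…,θ_m. If m = o(N) and n = Ω(N) as N → ∞, then lim_{m,n,N→∞} ℙ( ∃ i ∈ {1,…,m} such that sup_{x∈ℝ} |F^{θ_i}(x) − F^{θ₀}(x)| > √(log m / m) and θ_i ∈ 𝓔̂_m ) = 0. -/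
open MeasureTheory ProbabilityTheory Filter

lemma aux_exp_quad {x : ℝ} (hx : |x| ≤ 1) : Real.exp x ≤ 1 + x + x ^ 2 := by
  have h := Real.exp_bound hx (by norm_num : 0 < 2)
  have h2 : ∑ i ∈ Finset.range 2, x ^ i / (Nat.factorial i) = 1 + x := by
    simp [Finset.sum_range_succ]
  rw [h2] at h
  norm_num [Nat.factorial] at h
  have := abs_sub_le_iff.mp h
  nlinarith [this.1, this.2, sq_nonneg x]

lemma aux_precomp {Ω ι ι' β : Type*} [MeasurableSpace Ω] [MeasurableSpace β]
    {μ : Measure Ω} {f : ι → Ω → β}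
    (h : iIndepFun f μ) {κ : ι' → ι} (hκ : Function.Injective κ) :
    iIndepFun (fun i => f (κ i)) μ := by
  classical
  rw [iIndepFun_iff_measure_inter_preimage_eq_mul] at h ⊢
  intro S sets hsets
  set e : ι' ↪ ι := ⟨κ, hκ⟩ with he
  set sets' : ι → Set β := fun i =>
    if hh : ∃ j, j ∈ S ∧ κ j = i then sets hh.choose else Set.univ with hsets'
  have key : ∀ j ∈ S, sets' (κ j) = sets j := by
    intro j hj
    have hex : ∃ j', j' ∈ S ∧ κ j' = κ j := ⟨j, hj, rfl⟩
    have hj' : hex.choose = j := hκ hex.choose_spec.2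
    simp only [hsets', dif_pos hex, hj']
  have hmeas : ∀ i ∈ S.map e, MeasurableSet (sets' i) := by
    intro i hi
    rcases Finset.mem_map.mp hi with ⟨j, hj, rfl⟩
    rw [show e j = κ j from rfl, key j hj]
    exact hsets j hj
  have h2 := h (S.map e) hmeas
  rw [Finset.prod_map] at h2
  have hint : (⋂ i ∈ S.map e, f i ⁻¹' sets' i) = ⋂ j ∈ S, f (κ j) ⁻¹' sets j := by
    ext ω
    simp only [Set.mem_iInter, Finset.mem_map, Function.Embedding.coeFn_mk]
    constructor
    · intro hall j hj
      have := hall (κ j) ⟨j, hj, rfl⟩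
      rwa [key j hj] at this
    · rintro hall i ⟨j, hj, rfl⟩
      show ω ∈ f (κ j) ⁻¹' sets' (κ j)
      rw [key j hj]; exact hall j hj
  rw [hint] at h2
  rw [h2]
  refine Finset.prod_congr rfl fun j hj => ?_
  rw [show (e j : ι) = κ j from rfl, key j hj]

lemma aux_int_bdd {Ω : Type*} [MeasurableSpace Ω] (Pr : Measure Ω) [IsProbabilityMeasure Pr]
    (f : Ω → ℝ) (hf : Measurable f) (C : ℝ) (h : ∀ ω, |f ω| ≤ C) : Integrable f Pr :=
  (integrable_const C).mono' hf.aestronglyMeasurable (Filter.Eventually.of_forall (by simpa using h))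

lemma aux_mgf_ind {Ω : Type*} [MeasurableSpace Ω] (Pr : Measure Ω) [IsProbabilityMeasure Pr]
    (W : Ω → ℝ) (hW01 : ∀ ω, W ω = 0 ∨ W ω = 1) (hWm : Measurable W)
    (p t : ℝ) (hp : ∫ ω, W ω ∂Pr = p) (hp0 : 0 ≤ p) (hp1 : p ≤ 1) (ht : |t| ≤ 1) :
    mgf (fun ω => W ω - p) Pr t ≤ Real.exp (t ^ 2) := by
  have hWb : ∀ ω, |W ω| ≤ 1 := by
    intro ω; rcases hW01 ω with h | h <;> rw [h] <;> norm_num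
  have hWint : Integrable W Pr := aux_int_bdd Pr W hWm 1 hWb
  have key : ∀ ω, Real.exp (t * (W ω - p))
      = Real.exp (-(t * p)) * (1 + (Real.exp t - 1) * W ω) := by
    intro ω
    rcases hW01 ω with h | h <;> rw [h]
    · ring_nf
    · rw [show (1 + (Real.exp t - 1) * 1 : ℝ) = Real.exp t by ring, ← Real.exp_add]
      congr 1; ring
  have hmgf : mgf (fun ω => W ω - p) Pr t
      = Real.exp (-(t * p)) * (1 + (Real.exp t - 1) * p) := by
    rw [mgf]
    calc ∫ ω, Real.exp (t * (W ω - p)) ∂Pr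
        = ∫ ω, Real.exp (-(t * p)) * (1 + (Real.exp t - 1) * W ω) ∂Pr :=
          integral_congr_ae (Filter.Eventually.of_forall key)
      _ = Real.exp (-(t * p)) * ∫ ω, (1 + (Real.exp t - 1) * W ω) ∂Pr := by
          rw [integral_const_mul]
      _ = Real.exp (-(t * p)) * (1 + (Real.exp t - 1) * p) := by
          rw [integral_add (integrable_const 1) (hWint.const_mul _), integral_const,
            integral_const_mul, hp]
          simp
  rw [hmgf]
  have h1 : 1 + (Real.exp t - 1) * p ≤ Real.exp ((Real.exp t - 1) * p) := by
    have := Real.add_one_le_exp ((Real.exp t - 1) * p)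
    linarith
  have h2 : Real.exp (-(t * p)) * (1 + (Real.exp t - 1) * p)
      ≤ Real.exp (-(t * p)) * Real.exp ((Real.exp t - 1) * p) :=
    mul_le_mul_of_nonneg_left h1 (Real.exp_pos _).le
  rw [← Real.exp_add] at h2
  refine h2.trans (Real.exp_le_exp.mpr ?_)
  have h3 : 0 ≤ Real.exp t - 1 - t := by
    have := Real.add_one_le_exp t; linarith
  have h4 : Real.exp t - 1 - t ≤ t ^ 2 := by
    have := aux_exp_quad ht; linarith
  nlinarith

lemma aux_chernoff_sum {Ω : Type*} [MeasurableSpace Ω] (Pr : Measure Ω) [IsProbabilityMeasure Pr]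
    (V : ℕ → Ω → ℝ) (hVm : ∀ j, Measurable (V j))
    (hVi : iIndepFun V Pr)
    (t ε : ℝ) (ht : 0 ≤ t)
    (hint : ∀ j, Integrable (fun ω => Real.exp (t * V j ω)) Pr)
    (hmgf : ∀ j, mgf (V j) Pr t ≤ Real.exp (t ^ 2)) (M : ℕ) :
    (Pr {ω | ε ≤ ∑ j ∈ Finset.range M, V j ω}).toReal
      ≤ Real.exp (-t * ε + (M : ℝ) * t ^ 2) := by
  have hintS : Integrable (fun ω => Real.exp (t * (∑ j ∈ Finset.range M, V j) ω)) Pr :=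
    hVi.integrable_exp_mul_sum hVm (fun j _ => hint j)
  have h := measure_ge_le_exp_mul_mgf (X := ∑ j ∈ Finset.range M, V j) (μ := Pr) ε ht hintS
  rw [hVi.mgf_sum hVm] at h
  have hset : {ω | ε ≤ (∑ j ∈ Finset.range M, V j) ω}
      = {ω | ε ≤ ∑ j ∈ Finset.range M, V j ω} := by
    simp [Finset.sum_apply]
  rw [hset] at h
  refine h.trans ?_
  rw [Real.exp_add]
  refine mul_le_mul_of_nonneg_left ?_ (Real.exp_pos _).le
  calc ∏ j ∈ Finset.range M, mgf (V j) Pr t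
      ≤ ∏ _j ∈ Finset.range M, Real.exp (t ^ 2) :=
        Finset.prod_le_prod (fun j _ => mgf_nonneg) (fun j _ => hmgf j)
    _ = Real.exp ((M : ℝ) * t ^ 2) := by
        rw [Finset.prod_const, Finset.card_range, ← Real.exp_nat_mul]

lemma aux_ecdf_dev {Ω : Type*} [MeasurableSpace Ω] (Pr : Measure Ω) [IsProbabilityMeasure Pr]
    (ρ : Measure ℝ) [IsProbabilityMeasure ρ]
    (Z : ℕ → Ω → ℝ) (hZm : ∀ j, Measurable (Z j))
    (hZi : iIndepFun Z Pr)
    (hZd : ∀ j, Measure.map (Z j) Pr = ρ) (x : ℝ) (M : ℕ) (s : ℝ)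
    (hs0 : 0 ≤ s) (hs2 : s ≤ 2) :
    (Pr {ω | s ≤ |ecdfSeq Z M ω x - (ρ (Set.Iic x)).toReal|}).toReal
      ≤ 2 * Real.exp (-((M : ℝ) * s ^ 2) / 4) := by
  classical
  rcases Nat.eq_zero_or_pos M with hM | hM
  · subst hM
    have h1 : (Pr {ω | s ≤ |ecdfSeq Z 0 ω x - (ρ (Set.Iic x)).toReal|}).toReal ≤ 1 :=
      ENNReal.toReal_le_of_le_ofReal zero_le_one
        (by rw [ENNReal.ofReal_one]; exact prob_le_one)
    refine h1.trans ?_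
    have h2 : -(((0:ℕ):ℝ) * s ^ 2) / 4 = 0 := by norm_num
    rw [h2, Real.exp_zero]; norm_num
  · set p : ℝ := (ρ (Set.Iic x)).toReal with hpdef
    have hp0 : 0 ≤ p := ENNReal.toReal_nonneg
    have hp1 : p ≤ 1 :=
      ENNReal.toReal_le_of_le_ofReal zero_le_one
        (by rw [ENNReal.ofReal_one]; exact prob_le_one)
    set W : ℕ → Ω → ℝ := fun j ω => if Z j ω ≤ x then 1 else 0 with hWdef
    have hW01 : ∀ j ω, W j ω = 0 ∨ W j ω = 1 := by
      intro j ω; by_cases h : Z j ω ≤ x <;> simp [hWdef, h]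
    have hWm : ∀ j, Measurable (W j) := fun j =>
      Measurable.ite ((hZm j) measurableSet_Iic) measurable_const measurable_const
    have hWb : ∀ j ω, |W j ω| ≤ 1 := by
      intro j ω; rcases hW01 j ω with h | h <;> rw [h] <;> norm_num
    have hWint : ∀ j, Integrable (W j) Pr := fun j => aux_int_bdd Pr (W j) (hWm j) 1 (hWb j)
    have hWmean : ∀ j, ∫ ω, W j ω ∂Pr = p := by
      intro j
      have heq : (fun ω => W j ω) = (Z j ⁻¹' Set.Iic x).indicator (fun _ => (1:ℝ)) := by
        funext ω
        by_cases h : Z j ω ≤ x <;>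
          simp [hWdef, Set.indicator_apply, Set.mem_preimage, Set.mem_Iic, h]
      rw [heq]
      rw [show ((Z j ⁻¹' Set.Iic x).indicator (fun _ => (1:ℝ)))
        = (Z j ⁻¹' Set.Iic x).indicator (1 : Ω → ℝ) from rfl]
      rw [integral_indicator_one ((hZm j) measurableSet_Iic)]
      rw [hpdef, ← hZd j, Measure.map_apply (hZm j) measurableSet_Iic]
      rfl
    -- independence of transformed variables
    have hViP : iIndepFun (fun j ω => W j ω - p) Pr := by
      have hgm : Measurable (fun y : ℝ => (if y ≤ x then (1:ℝ) else 0) - p) :=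
        (Measurable.ite measurableSet_Iic measurable_const measurable_const).sub measurable_const
      exact hZi.comp (fun _ => fun y : ℝ => (if y ≤ x then (1:ℝ) else 0) - p) (fun _ => hgm)
    have hViM : iIndepFun (fun j ω => p - W j ω) Pr := by
      have hgm : Measurable (fun y : ℝ => p - (if y ≤ x then (1:ℝ) else 0)) :=
        measurable_const.sub
          (Measurable.ite measurableSet_Iic measurable_const measurable_const)
      exact hZi.comp (fun _ => fun y : ℝ => p - (if y ≤ x then (1:ℝ) else 0)) (fun _ => hgm)
    set t : ℝ := s / 2 with htdef
    have ht0 : 0 ≤ t := by positivity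
    have ht1 : |t| ≤ 1 := by rw [abs_of_nonneg ht0]; simp only [htdef]; linarith
    -- integrability of exponentials
    have hintP : ∀ j, Integrable (fun ω => Real.exp (t * (W j ω - p))) Pr := by
      intro j
      refine aux_int_bdd Pr _ (((((hWm j).sub measurable_const).const_mul t)).exp)
        (Real.exp 2) fun ω => ?_
      rw [abs_of_pos (Real.exp_pos _)]
      refine Real.exp_le_exp.mpr ?_
      have h1 : |t * (W j ω - p)| ≤ 2 := by
        rw [abs_mul]
        have := hWb j ω
        have h2 : |W j ω - p| ≤ 2 := by
          have := abs_sub_abs_le_abs_sub (W j ω) p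
          have := abs_sub (W j ω) p
          calc |W j ω - p| ≤ |W j ω| + |p| := abs_sub _ _
            _ ≤ 1 + 1 := add_le_add (hWb j ω) (by rw [abs_of_nonneg hp0]; exact hp1)
            _ = 2 := by norm_num
        calc |t| * |W j ω - p| ≤ 1 * 2 := mul_le_mul ht1 h2 (abs_nonneg _) zero_le_one
          _ = 2 := by norm_num
      exact (le_abs_self _).trans h1
    have hintM : ∀ j, Integrable (fun ω => Real.exp (t * (p - W j ω))) Pr := by
      intro j
      refine aux_int_bdd Pr _ ((((measurable_const.sub (hWm j)).const_mul t)).exp)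
        (Real.exp 2) fun ω => ?_
      rw [abs_of_pos (Real.exp_pos _)]
      refine Real.exp_le_exp.mpr ?_
      have h2 : |p - W j ω| ≤ 2 := by
        calc |p - W j ω| ≤ |p| + |W j ω| := abs_sub _ _
          _ ≤ 1 + 1 := add_le_add (by rw [abs_of_nonneg hp0]; exact hp1) (hWb j ω)
          _ = 2 := by norm_num
      have h1 : |t * (p - W j ω)| ≤ 2 := by
        rw [abs_mul]
        calc |t| * |p - W j ω| ≤ 1 * 2 := mul_le_mul ht1 h2 (abs_nonneg _) zero_le_one
          _ = 2 := by norm_num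
      exact (le_abs_self _).trans h1
    -- mgf bounds
    have hmgfP : ∀ j, mgf (fun ω => W j ω - p) Pr t ≤ Real.exp (t ^ 2) := fun j =>
      aux_mgf_ind Pr (W j) (hW01 j) (hWm j) p t (hWmean j) hp0 hp1 ht1
    have hmgfM : ∀ j, mgf (fun ω => p - W j ω) Pr t ≤ Real.exp (t ^ 2) := by
      intro j
      have heq : (fun ω => p - W j ω) = (fun ω => (1 - W j ω) - (1 - p)) := by
        funext ω; ring
      rw [heq]
      refine aux_mgf_ind Pr (fun ω => 1 - W j ω) ?_ (measurable_const.sub (hWm j)) (1 - p) t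
        ?_ (by linarith) (by linarith) ht1
      · intro ω
        rcases hW01 j ω with h | h
        · right; show (1:ℝ) - W j ω = 1; rw [h]; norm_num
        · left; show (1:ℝ) - W j ω = 0; rw [h]; norm_num
      · rw [integral_sub (integrable_const 1) (hWint j), integral_const, hWmean j]
        simp
    -- Chernoff both tails
    have hA := aux_chernoff_sum Pr (fun j ω => W j ω - p)
      (fun j => (hWm j).sub measurable_const) hViP t ((M : ℝ) * s) ht0 hintP hmgfP M
    have hB := aux_chernoff_sum Pr (fun j ω => p - W j ω)
      (fun j => measurable_const.sub (hWm j)) hViM t ((M : ℝ) * s) ht0 hintM hmgfM M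
    have hexp : -t * ((M : ℝ) * s) + (M : ℝ) * t ^ 2 = -((M : ℝ) * s ^ 2) / 4 := by
      simp only [htdef]; ring
    rw [hexp] at hA hB
    -- event inclusion
    have hMpos : (0:ℝ) < (M : ℝ) := Nat.cast_pos.mpr hM
    have hsub : {ω | s ≤ |ecdfSeq Z M ω x - p|} ⊆
        {ω | (M : ℝ) * s ≤ ∑ j ∈ Finset.range M, (W j ω - p)} ∪
        {ω | (M : ℝ) * s ≤ ∑ j ∈ Finset.range M, (p - W j ω)} := by
      intro ω hω
      have hsum : ecdfSeq Z M ω x - p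
          = (M : ℝ)⁻¹ * ∑ j ∈ Finset.range M, (W j ω - p) := by
        rw [Finset.sum_sub_distrib, Finset.sum_const, Finset.card_range, mul_sub]
        congr 1
        rw [nsmul_eq_mul, ← mul_assoc, inv_mul_cancel₀ hMpos.ne', one_mul]
      have hω' : s ≤ |ecdfSeq Z M ω x - p| := hω
      rcases le_abs.mp hω' with h | h
      · left
        rw [Set.mem_setOf_eq]
        rw [hsum] at h
        have h3 := mul_le_mul_of_nonneg_left h hMpos.le
        rwa [← mul_assoc, mul_inv_cancel₀ hMpos.ne', one_mul] at h3
      · right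
        rw [Set.mem_setOf_eq]
        have hsum2 : -(ecdfSeq Z M ω x - p)
            = (M : ℝ)⁻¹ * ∑ j ∈ Finset.range M, (p - W j ω) := by
          rw [hsum]
          rw [show (∑ j ∈ Finset.range M, (p - W j ω))
            = -∑ j ∈ Finset.range M, (W j ω - p) by
              rw [← Finset.sum_neg_distrib]; exact Finset.sum_congr rfl fun j _ => by ring]
          ring
        rw [hsum2] at h
        have h3 := mul_le_mul_of_nonneg_left h hMpos.le
        rwa [← mul_assoc, mul_inv_cancel₀ hMpos.ne', one_mul] at h3
    calc (Pr {ω | s ≤ |ecdfSeq Z M ω x - p|}).toReal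
        ≤ (Pr ({ω | (M : ℝ) * s ≤ ∑ j ∈ Finset.range M, (W j ω - p)} ∪
            {ω | (M : ℝ) * s ≤ ∑ j ∈ Finset.range M, (p - W j ω)})).toReal :=
          ENNReal.toReal_mono (measure_ne_top _ _) (measure_mono hsub)
      _ ≤ ((Pr {ω | (M : ℝ) * s ≤ ∑ j ∈ Finset.range M, (W j ω - p)}) +
            (Pr {ω | (M : ℝ) * s ≤ ∑ j ∈ Finset.range M, (p - W j ω)})).toReal :=
          ENNReal.toReal_mono
            (ENNReal.add_ne_top.mpr ⟨measure_ne_top _ _, measure_ne_top _ _⟩)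
            (measure_union_le _ _)
      _ = (Pr {ω | (M : ℝ) * s ≤ ∑ j ∈ Finset.range M, (W j ω - p)}).toReal +
            (Pr {ω | (M : ℝ) * s ≤ ∑ j ∈ Finset.range M, (p - W j ω)}).toReal :=
          ENNReal.toReal_add (measure_ne_top _ _) (measure_ne_top _ _)
      _ ≤ Real.exp (-((M : ℝ) * s ^ 2) / 4) + Real.exp (-((M : ℝ) * s ^ 2) / 4) :=
          add_le_add hA hB
      _ = 2 * Real.exp (-((M : ℝ) * s ^ 2) / 4) := by ring
lemma aux_prob_toReal_le_one {β : Type*} [MeasurableSpace β] (μ : Measure β)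
    [IsProbabilityMeasure μ] (s : Set β) : (μ s).toReal ≤ 1 :=
  ENNReal.toReal_le_of_le_ofReal zero_le_one (by rw [ENNReal.ofReal_one]; exact prob_le_one)

lemma aux_ecdf_nonneg {Ω : Type*} (Z : ℕ → Ω → ℝ) (M : ℕ) (ω : Ω) (x : ℝ) :
    0 ≤ ecdfSeq Z M ω x := by
  unfold ecdfSeq
  refine mul_nonneg (by positivity) (Finset.sum_nonneg fun j _ => ?_)
  by_cases h : Z j ω ≤ x <;> simp [h]

lemma aux_ecdf_le_one {Ω : Type*} (Z : ℕ → Ω → ℝ) (M : ℕ) (ω : Ω) (x : ℝ) :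
    ecdfSeq Z M ω x ≤ 1 := by
  unfold ecdfSeq
  rcases Nat.eq_zero_or_pos M with hM | hM
  · subst hM; simp
  · have hMpos : (0:ℝ) < (M : ℝ) := Nat.cast_pos.mpr hM
    have hsum : (∑ j ∈ Finset.range M, if Z j ω ≤ x then (1:ℝ) else 0) ≤ (M : ℝ) := by
      calc (∑ j ∈ Finset.range M, if Z j ω ≤ x then (1:ℝ) else 0)
          ≤ ∑ _j ∈ Finset.range M, (1:ℝ) :=
            Finset.sum_le_sum fun j _ => by by_cases h : Z j ω ≤ x <;> simp [h]
        _ = (M : ℝ) := by simp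
    calc (M : ℝ)⁻¹ * (∑ j ∈ Finset.range M, if Z j ω ≤ x then (1:ℝ) else 0)
        ≤ (M : ℝ)⁻¹ * (M : ℝ) := mul_le_mul_of_nonneg_left hsum (by positivity)
      _ = 1 := inv_mul_cancel₀ hMpos.ne'


/-- **Corollary 3.** If `m = o(N)` and `n = Ω(N)`, then the probability that some candidate
`θᵢ` with `sup_x |F^{θᵢ}(x) - F^{θ₀}(x)| > √(log m / m)` lies in the eligibility set `𝓔̂_m`
tends to `0` as `m, n, N → ∞`. -/
theorem stmt_6
    {Ω : Type*} [MeasurableSpace Ω] (Pr : Measure Ω) [IsProbabilityMeasure Pr]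
    (μ : Measure ℝ) [IsProbabilityMeasure μ]
    (ν : ℕ → Measure ℝ) [∀ i, IsProbabilityMeasure (ν i)]
    (X : ℕ → Ω → ℝ) (Y : ℕ → ℕ → Ω → ℝ)
    (hXm : ∀ i, Measurable (X i)) (hYm : ∀ i j, Measurable (Y i j))
    (hindep : iIndepFun
      (Sum.elim X (fun p : ℕ × ℕ => Y p.1 p.2)) Pr)
    (hX : ∀ k, Measure.map (X k) Pr = μ) (hY : ∀ i j, Measure.map (Y i j) Pr = ν i)
    (α : ℝ) (hα : α ∈ Set.Ioo (0 : ℝ) 1)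
    (q : ℝ) (hq0 : 0 < q)
    (hq : 2 * ∑' v : ℕ, (-1 : ℝ) ^ v * Real.exp (-2 * ((v : ℝ) + 1) ^ 2 * q ^ 2) = α)
    (m n : ℕ → ℕ)
    (hm : Tendsto m atTop atTop) (hn : Tendsto n atTop atTop)
    -- `m = o(N)`
    (hmN : Tendsto (fun N => (m N : ℝ) / (N : ℝ)) atTop (nhds 0))
    -- `n = Ω(N)`
    (hnN : ∃ c > (0 : ℝ), ∀ᶠ N : ℕ in atTop, c * (N : ℝ) ≤ (n N : ℝ)) :
    Tendsto (fun N =>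
      (Pr {ω | ∃ i < m N,
        Real.sqrt (Real.log (m N) / (m N : ℝ)) <
          (⨆ x : ℝ, |(ν i (Set.Iic x)).toReal - (μ (Set.Iic x)).toReal|) ∧
        (⨆ x : ℝ, |ecdfSeq (Y i) (n N) ω x - ecdfSeq X N ω x|) ≤ q / Real.sqrt N}).toReal)
      atTop (nhds 0) := by
  classical
  obtain ⟨c, hc0, hcN⟩ := hnN
  set c' : ℝ := min c 1 with hc'def
  have hc'0 : 0 < c' := lt_min hc0 one_pos
  have hc'1 : c' ≤ 1 := min_le_right _ _
  have hc'ne : c' ≠ 0 := hc'0.ne'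
  have hc'c : c' ≤ c := min_le_left _ _
  -- independence of subfamilies
  have hYi : ∀ i, iIndepFun (Y i) Pr := by
    intro i
    have hinj : Function.Injective (fun j : ℕ => (Sum.inr (i, j) : ℕ ⊕ ℕ × ℕ)) := by
      intro a b hab; simpa using hab
    exact aux_precomp hindep hinj
  have hXi : iIndepFun X Pr := by
    have hinj : Function.Injective (fun k : ℕ => (Sum.inl k : ℕ ⊕ ℕ × ℕ)) := by
      intro a b hab; simpa using hab
    exact aux_precomp hindep hinj
  -- the dominating sequence
  set g : ℕ → ℝ := fun N =>
    4 * (m N : ℝ) * Real.exp (-(c' * (N : ℝ) * (Real.log (m N) / (m N : ℝ)) / 64))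
    with hgdef
  have hmcast : Tendsto (fun N => (m N : ℝ)) atTop atTop :=
    tendsto_natCast_atTop_atTop.comp hm
  have hNcast : Tendsto (fun N : ℕ => (N : ℝ)) atTop atTop := tendsto_natCast_atTop_atTop
  have hmpos : ∀ᶠ N : ℕ in atTop, (0:ℝ) < (m N : ℝ) := hmcast.eventually_gt_atTop 0
  have hNpos : ∀ᶠ N : ℕ in atTop, (0:ℝ) < (N : ℝ) := hNcast.eventually_gt_atTop 0
  have hNm : Tendsto (fun N : ℕ => (N : ℝ) / (m N : ℝ)) atTop atTop := by
    have hpos : ∀ᶠ N : ℕ in atTop, (0:ℝ) < (m N : ℝ) / (N : ℝ) := by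
      filter_upwards [hmpos, hNpos] with N h1 h2
      positivity
    have h0 : Tendsto (fun N => (m N : ℝ) / (N : ℝ)) atTop (nhdsWithin 0 (Set.Ioi 0)) :=
      tendsto_nhdsWithin_of_tendsto_nhds_of_eventually_within _ hmN hpos
    have h1 := h0.inv_tendsto_nhdsGT_zero
    refine h1.congr fun N => ?_
    simp [Pi.inv_apply, inv_div]
  have hlog : Tendsto (fun N => Real.log (m N)) atTop atTop :=
    Real.tendsto_log_atTop.comp hmcast
  -- g tends to 0
  have hg0 : Tendsto g atTop (nhds 0) := by
    have hkey : Tendsto (fun N => Real.log (m N)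
        - c' * (N : ℝ) * (Real.log (m N) / (m N : ℝ)) / 64) atTop atBot := by
      refine tendsto_atBot_mono' atTop ?_ (tendsto_neg_atTop_atBot.comp hlog)
      filter_upwards [hNm.eventually_ge_atTop (128 / c'), hlog.eventually_ge_atTop 1, hmpos]
        with N hr hl hmp
      have hE : c' * (N : ℝ) * (Real.log (m N) / (m N : ℝ)) / 64
          = (c' / 64) * ((N : ℝ) / (m N : ℝ)) * Real.log (m N) := by
        ring
      have h2 : (2:ℝ) ≤ (c' / 64) * ((N : ℝ) / (m N : ℝ)) := by
        have h5 := mul_le_mul_of_nonneg_left hr (by positivity : (0:ℝ) ≤ c' / 64)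
        calc (2:ℝ) = (c' / 64) * (128 / c') := by field_simp; ring
          _ ≤ (c' / 64) * ((N : ℝ) / (m N : ℝ)) := h5
      have h3 : 2 * Real.log (m N) ≤ (c' / 64) * ((N : ℝ) / (m N : ℝ)) * Real.log (m N) :=
        mul_le_mul_of_nonneg_right h2 (by linarith)
      show Real.log (m N) - c' * (N : ℝ) * (Real.log (m N) / (m N : ℝ)) / 64
          ≤ -(Real.log (m N))
      rw [hE]
      linarith
    have hexp : Tendsto (fun N => Real.exp (Real.log (m N)
        - c' * (N : ℝ) * (Real.log (m N) / (m N : ℝ)) / 64)) atTop (nhds 0) :=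
      Real.tendsto_exp_atBot.comp hkey
    have h4 : Tendsto (fun N => 4 * Real.exp (Real.log (m N)
        - c' * (N : ℝ) * (Real.log (m N) / (m N : ℝ)) / 64)) atTop (nhds (4 * 0)) :=
      hexp.const_mul 4
    rw [mul_zero] at h4
    refine Tendsto.congr' ?_ h4
    filter_upwards [hmpos] with N hmp
    simp only [hgdef]
    rw [Real.exp_sub, Real.exp_log hmp, Real.exp_neg]
    ring
  -- eventual inequality
  have hNL : Tendsto (fun N : ℕ => (N : ℝ) * (Real.log (m N) / (m N : ℝ))) atTop atTop := by
    refine (hNm.atTop_mul_atTop₀ hlog).congr fun N => ?_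
    ring
  have hsq : ∀ᶠ N in atTop,
      (Pr {ω | ∃ i < m N,
        Real.sqrt (Real.log (m N) / (m N : ℝ)) <
          (⨆ x : ℝ, |(ν i (Set.Iic x)).toReal - (μ (Set.Iic x)).toReal|) ∧
        (⨆ x : ℝ, |ecdfSeq (Y i) (n N) ω x - ecdfSeq X N ω x|) ≤ q / Real.sqrt N}).toReal
      ≤ g N := by
    filter_upwards [hm.eventually_ge_atTop 3, hcN,
      hNL.eventually_ge_atTop (4 * q ^ 2), hmpos, hNpos] with N h3m hcn h4q hmp hNp
    simp only [hgdef]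
    set L : ℝ := Real.log (m N) with hLdef
    have h3r : (3:ℝ) ≤ (m N : ℝ) := by exact_mod_cast h3m
    have hL1 : 1 ≤ L := by
      rw [hLdef, Real.le_log_iff_exp_le hmp]
      calc Real.exp 1 ≤ 2.7182818286 := Real.exp_one_lt_d9.le
        _ ≤ 3 := by norm_num
        _ ≤ (m N : ℝ) := h3r
    have hLm0 : 0 ≤ L / (m N : ℝ) := div_nonneg (by linarith) hmp.le
    set δ : ℝ := Real.sqrt (L / (m N : ℝ)) with hδdef
    have hδ0 : 0 < δ := Real.sqrt_pos.mpr (div_pos (by linarith) hmp)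
    have hδsq : δ ^ 2 = L / (m N : ℝ) := Real.sq_sqrt hLm0
    have hδ1 : δ ≤ 1 := by
      rw [hδdef, show (1:ℝ) = Real.sqrt 1 by rw [Real.sqrt_one]]
      apply Real.sqrt_le_sqrt
      rw [div_le_one hmp]
      have := Real.log_le_sub_one_of_pos hmp
      linarith
    set s : ℝ := δ / 4 with hsdef
    have hs0 : 0 ≤ s := by positivity
    have hs2 : s ≤ 2 := by rw [hsdef]; linarith
    have hssq : s ^ 2 = (L / (m N : ℝ)) / 16 := by rw [hsdef, div_pow, hδsq]; norm_num
    have hsN : 0 < Real.sqrt (N : ℝ) := Real.sqrt_pos.mpr hNp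
    have hqδ : q / Real.sqrt (N : ℝ) ≤ δ / 2 := by
      rw [div_le_div_iff₀ hsN (by norm_num : (0:ℝ) < 2)]
      have hsq2 : (q * 2) ^ 2 ≤ (δ * Real.sqrt (N : ℝ)) ^ 2 := by
        have hrhs : (δ * Real.sqrt (N : ℝ)) ^ 2 = L / (m N : ℝ) * (N : ℝ) := by
          rw [mul_pow, hδsq, Real.sq_sqrt hNp.le]
        rw [hrhs]
        calc (q * 2) ^ 2 = 4 * q ^ 2 := by ring
          _ ≤ (N : ℝ) * (L / (m N : ℝ)) := h4q
          _ = L / (m N : ℝ) * (N : ℝ) := by ring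
      calc q * 2 = Real.sqrt ((q * 2) ^ 2) := (Real.sqrt_sq (by positivity)).symm
        _ ≤ Real.sqrt ((δ * Real.sqrt (N : ℝ)) ^ 2) := Real.sqrt_le_sqrt hsq2
        _ = δ * Real.sqrt (N : ℝ) := Real.sqrt_sq (by positivity)
    -- bounded suprema
    have hBdd1 : ∀ i, BddAbove (Set.range fun x : ℝ =>
        |(ν i (Set.Iic x)).toReal - (μ (Set.Iic x)).toReal|) := by
      intro i
      refine ⟨2, ?_⟩
      rintro _ ⟨x, rfl⟩
      calc |(ν i (Set.Iic x)).toReal - (μ (Set.Iic x)).toReal|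
          ≤ |(ν i (Set.Iic x)).toReal| + |(μ (Set.Iic x)).toReal| := abs_sub _ _
        _ ≤ 1 + 1 := add_le_add
            (by rw [abs_of_nonneg ENNReal.toReal_nonneg]; exact aux_prob_toReal_le_one _ _)
            (by rw [abs_of_nonneg ENNReal.toReal_nonneg]; exact aux_prob_toReal_le_one _ _)
        _ = 2 := by norm_num
    have hBdd2 : ∀ (i : ℕ) (ω : Ω), BddAbove (Set.range fun x : ℝ =>
        |ecdfSeq (Y i) (n N) ω x - ecdfSeq X N ω x|) := by
      intro i ω
      refine ⟨2, ?_⟩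
      rintro _ ⟨x, rfl⟩
      calc |ecdfSeq (Y i) (n N) ω x - ecdfSeq X N ω x|
          ≤ |ecdfSeq (Y i) (n N) ω x| + |ecdfSeq X N ω x| := abs_sub _ _
        _ ≤ 1 + 1 := add_le_add
            (by rw [abs_of_nonneg (aux_ecdf_nonneg _ _ _ _)]; exact aux_ecdf_le_one _ _ _ _)
            (by rw [abs_of_nonneg (aux_ecdf_nonneg _ _ _ _)]; exact aux_ecdf_le_one _ _ _ _)
        _ = 2 := by norm_num
    -- witness points
    have hwit : ∀ i, (δ < ⨆ x : ℝ, |(ν i (Set.Iic x)).toReal - (μ (Set.Iic x)).toReal|)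
        → ∃ x : ℝ, δ < |(ν i (Set.Iic x)).toReal - (μ (Set.Iic x)).toReal| :=
      fun i h => (lt_ciSup_iff (hBdd1 i)).mp h
    set xw : ℕ → ℝ := fun i =>
      if h : ∃ x : ℝ, δ < |(ν i (Set.Iic x)).toReal - (μ (Set.Iic x)).toReal|
      then h.choose else 0 with hxwdef
    have hxw : ∀ i, (∃ x : ℝ, δ < |(ν i (Set.Iic x)).toReal - (μ (Set.Iic x)).toReal|)
        → δ < |(ν i (Set.Iic (xw i))).toReal - (μ (Set.Iic (xw i))).toReal| := by
      intro i h
      simp only [hxwdef, dif_pos h]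
      exact h.choose_spec
    -- inclusion into union of pointwise-deviation events
    have hsub : {ω | ∃ i < m N,
        δ < (⨆ x : ℝ, |(ν i (Set.Iic x)).toReal - (μ (Set.Iic x)).toReal|) ∧
        (⨆ x : ℝ, |ecdfSeq (Y i) (n N) ω x - ecdfSeq X N ω x|) ≤ q / Real.sqrt N}
        ⊆ ⋃ i ∈ Finset.range (m N),
          ({ω | s ≤ |ecdfSeq (Y i) (n N) ω (xw i) - (ν i (Set.Iic (xw i))).toReal|} ∪
           {ω | s ≤ |ecdfSeq X N ω (xw i) - (μ (Set.Iic (xw i))).toReal|}) := by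
      rintro ω ⟨i, him, hsup, hemp⟩
      have hex := hwit i hsup
      refine Set.mem_biUnion (Finset.mem_range.mpr him) ?_
      by_contra hcon
      rw [Set.mem_union, Set.mem_setOf_eq, Set.mem_setOf_eq] at hcon
      push_neg at hcon
      have hpt : |ecdfSeq (Y i) (n N) ω (xw i) - ecdfSeq X N ω (xw i)|
          ≤ q / Real.sqrt (N : ℝ) :=
        le_trans (le_ciSup (hBdd2 i ω) (xw i)) hemp
      have htri1 := abs_sub_le ((ν i (Set.Iic (xw i))).toReal)
        (ecdfSeq (Y i) (n N) ω (xw i)) ((μ (Set.Iic (xw i))).toReal)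
      have htri2 := abs_sub_le (ecdfSeq (Y i) (n N) ω (xw i))
        (ecdfSeq X N ω (xw i)) ((μ (Set.Iic (xw i))).toReal)
      have hx1 : |(ν i (Set.Iic (xw i))).toReal - ecdfSeq (Y i) (n N) ω (xw i)|
          = |ecdfSeq (Y i) (n N) ω (xw i) - (ν i (Set.Iic (xw i))).toReal| :=
        abs_sub_comm _ _
      have hP := hxw i hex
      have hc1 := hcon.1
      have hc2 := hcon.2
      rw [hsdef] at hc1 hc2
      linarith
    -- deviation bounds
    have hdevA : ∀ i, (Pr {ω | s ≤
        |ecdfSeq (Y i) (n N) ω (xw i) - (ν i (Set.Iic (xw i))).toReal|}).toReal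
        ≤ 2 * Real.exp (-(c' * (N : ℝ) * (L / (m N : ℝ)) / 64)) := by
      intro i
      have hd := aux_ecdf_dev Pr (ν i) (Y i) (hYm i) (hYi i) (hY i) (xw i) (n N) s hs0 hs2
      refine hd.trans ?_
      have h2 : c' * (N : ℝ) ≤ (n N : ℝ) :=
        le_trans (mul_le_mul_of_nonneg_right hc'c hNp.le) hcn
      have h1 : c' * (N : ℝ) * (L / (m N : ℝ)) / 64 ≤ ((n N : ℝ) * s ^ 2) / 4 := by
        rw [hssq]
        have h4 := mul_le_mul_of_nonneg_right h2 hLm0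
        linarith
      gcongr
      linarith
    have hdevB : ∀ i, (Pr {ω | s ≤
        |ecdfSeq X N ω (xw i) - (μ (Set.Iic (xw i))).toReal|}).toReal
        ≤ 2 * Real.exp (-(c' * (N : ℝ) * (L / (m N : ℝ)) / 64)) := by
      intro i
      have hd := aux_ecdf_dev Pr μ X hXm hXi hX (xw i) N s hs0 hs2
      refine hd.trans ?_
      have h2 : c' * (N : ℝ) ≤ (N : ℝ) := by
        have := mul_le_mul_of_nonneg_right hc'1 hNp.le
        linarith
      have h1 : c' * (N : ℝ) * (L / (m N : ℝ)) / 64 ≤ ((N : ℝ) * s ^ 2) / 4 := by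
        rw [hssq]
        have h4 := mul_le_mul_of_nonneg_right h2 hLm0
        linarith
      gcongr
      linarith
    -- assemble
    set r : ℝ := 2 * Real.exp (-(c' * (N : ℝ) * (L / (m N : ℝ)) / 64)) with hrdef
    have hr0 : 0 ≤ r := by positivity
    have hofA : ∀ i, Pr {ω | s ≤
        |ecdfSeq (Y i) (n N) ω (xw i) - (ν i (Set.Iic (xw i))).toReal|}
        ≤ ENNReal.ofReal r := fun i =>
      (ENNReal.le_ofReal_iff_toReal_le (measure_ne_top _ _) hr0).mpr (hdevA i)
    have hofB : ∀ i, Pr {ω | s ≤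
        |ecdfSeq X N ω (xw i) - (μ (Set.Iic (xw i))).toReal|}
        ≤ ENNReal.ofReal r := fun i =>
      (ENNReal.le_ofReal_iff_toReal_le (measure_ne_top _ _) hr0).mpr (hdevB i)
    have hmain : Pr {ω | ∃ i < m N,
        δ < (⨆ x : ℝ, |(ν i (Set.Iic x)).toReal - (μ (Set.Iic x)).toReal|) ∧
        (⨆ x : ℝ, |ecdfSeq (Y i) (n N) ω x - ecdfSeq X N ω x|) ≤ q / Real.sqrt N}
        ≤ ENNReal.ofReal ((m N : ℝ) * (r + r)) := by
      calc Pr {ω | ∃ i < m N,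
          δ < (⨆ x : ℝ, |(ν i (Set.Iic x)).toReal - (μ (Set.Iic x)).toReal|) ∧
          (⨆ x : ℝ, |ecdfSeq (Y i) (n N) ω x - ecdfSeq X N ω x|) ≤ q / Real.sqrt N}
          ≤ Pr (⋃ i ∈ Finset.range (m N),
            ({ω | s ≤ |ecdfSeq (Y i) (n N) ω (xw i) - (ν i (Set.Iic (xw i))).toReal|} ∪
             {ω | s ≤ |ecdfSeq X N ω (xw i) - (μ (Set.Iic (xw i))).toReal|})) :=
            measure_mono hsub
        _ ≤ ∑ i ∈ Finset.range (m N), Pr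
            ({ω | s ≤ |ecdfSeq (Y i) (n N) ω (xw i) - (ν i (Set.Iic (xw i))).toReal|} ∪
             {ω | s ≤ |ecdfSeq X N ω (xw i) - (μ (Set.Iic (xw i))).toReal|}) :=
            measure_biUnion_finset_le _ _
        _ ≤ ∑ _i ∈ Finset.range (m N), (ENNReal.ofReal r + ENNReal.ofReal r) :=
            Finset.sum_le_sum fun i _ =>
              (measure_union_le _ _).trans (add_le_add (hofA i) (hofB i))
        _ = (m N) • (ENNReal.ofReal r + ENNReal.ofReal r) := by
            rw [Finset.sum_const, Finset.card_range]
        _ = ENNReal.ofReal ((m N : ℝ) * (r + r)) := by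
            rw [← ENNReal.ofReal_add hr0 hr0, nsmul_eq_mul, ← ENNReal.ofReal_natCast (m N),
              ← ENNReal.ofReal_mul (Nat.cast_nonneg _)]
    have hfin := ENNReal.toReal_le_of_le_ofReal
      (by positivity : (0:ℝ) ≤ (m N : ℝ) * (r + r)) hmain
    refine hfin.trans ?_
    rw [hrdef]
    exact le_of_eq (by ring)
  exact tendsto_of_tendsto_of_tendsto_of_le_of_le' tendsto_const_nhds hg0
    (Filter.Eventually.of_forall fun N => ENNReal.toReal_nonneg) hsq
end

section
/- Suppose that X₁,…,X_N is an i.i.d. sample from a distribution with CDF F^{θ₀} and Y₁^{θ},…,Y_n^{θ} is an independent i.i.d. sample from a distribution with CDF F^{θ}, with empirical distribution functions F_N^{θ₀} and F_n^{θ} respectively, and suppose sup_{x∈ℝ} |F^{θ}(x) − F^{θ₀}(x)| > 0. For any ε₁, ε₂ > 0 with ε₁ + ε₂ < sup_{x∈ℝ} |F^{θ}(x) − F^{θ₀}(x)|, if nN/(n+N) > (−(1/2)log(α/2)) / (sup_{x∈ℝ} |F^{θ}(x) − F^{θ₀}(x)| − ε₁ − ε₂)², then ℙ( sup_{x∈ℝ}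 |F_n^{θ}(x) − F_N^{θ₀}(x)| ≤ √((n+N)/(nN)) · √(−(1/2)log(α/2)) ) ≤ 2( e^{−2nε₁²} + e^{−2Nε₂²} ). -/
open MeasureTheory ProbabilityTheory Filter

lemma bern_mgf_le_s8 {p : ℝ} (hp0 : 0 ≤ p) (hp1 : p ≤ 1) (t : ℝ) :
    (1 - p) * Real.exp (t * (0 - p)) + p * Real.exp (t * (1 - p)) ≤ Real.exp (t ^ 2 / 8) := by
  set D : ℝ → ℝ := fun s => 1 - p + p * Real.exp s with hDdef
  have hD : ∀ s, 0 < D s := by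
    intro s
    rcases hp0.eq_or_lt with h | h
    · simp [hDdef, ← h]
    · have : 0 < p * Real.exp s := mul_pos h (Real.exp_pos s)
      simp only [hDdef]; linarith
  set g : ℝ → ℝ := fun s => p * Real.exp s / D s with hgdef
  set h : ℝ → ℝ := fun s => Real.log (D s) - p * s - s ^ 2 / 8 with hhdef
  set h' : ℝ → ℝ := fun s => g s - p - s / 4 with hh'def
  have hDd : ∀ s, HasDerivAt D (p * Real.exp s) s := by
    intro s
    exact ((Real.hasDerivAt_exp s).const_mul p).const_add (1 - p)
  have hhd : ∀ s, HasDerivAt h (h' s) s := by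
    intro s
    have h1 : HasDerivAt (fun u => Real.log (D u)) (p * Real.exp s / D s) s :=
      (hDd s).log (hD s).ne'
    have h2 : HasDerivAt (fun u : ℝ => p * u) p s := by
      simpa using (hasDerivAt_id s).const_mul p
    have h3 : HasDerivAt (fun u : ℝ => u ^ 2 / 8) (s / 4) s := by
      have := (hasDerivAt_pow 2 s).div_const 8
      exact this.congr_deriv (by push_cast; ring)
    exact (h1.sub h2).sub h3
  have hg01 : ∀ s, 0 ≤ g s ∧ g s ≤ 1 := by
    intro s
    constructor
    · exact div_nonneg (by positivity) (hD s).le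
    · rw [div_le_one (hD s)]
      simp only [hDdef]; nlinarith [Real.exp_pos s]
  have hh'd : ∀ s, HasDerivAt h' (g s * (1 - g s) - 1 / 4) s := by
    intro s
    have hgd : HasDerivAt g
        ((p * Real.exp s * D s - p * Real.exp s * (p * Real.exp s)) / D s ^ 2) s :=
      ((Real.hasDerivAt_exp s).const_mul p).div (hDd s) (hD s).ne'
    have heq : (p * Real.exp s * D s - p * Real.exp s * (p * Real.exp s)) / D s ^ 2
        = g s * (1 - g s) := by
      have hgen : ∀ A B : ℝ, B ≠ 0 → (A * B - A * A) / B ^ 2 = A / B * (1 - A / B) := by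
        intro A B hB; field_simp
      exact hgen (p * Real.exp s) (D s) (hD s).ne'
    rw [heq] at hgd
    have := (hgd.sub_const p).sub ((hasDerivAt_id s).div_const 4)
    exact this
  have hh'anti : Antitone h' := by
    apply antitone_of_deriv_nonpos (fun s => (hh'd s).differentiableAt)
    intro s
    rw [(hh'd s).deriv]
    nlinarith [(hg01 s).1, (hg01 s).2, sq_nonneg (g s - 1 / 2)]
  have hh'0 : h' 0 = 0 := by
    simp only [hh'def, hgdef, hDdef, Real.exp_zero, mul_one]
    have : 1 - p + p = 1 := by ring
    rw [this]
    norm_num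
  have hh0 : h 0 = 0 := by
    have : D 0 = 1 := by simp [hDdef]
    simp [hhdef, this]
  have hdiff : Differentiable ℝ h := fun s => (hhd s).differentiableAt
  have key : ∀ s, h s ≤ 0 := by
    intro s
    rcases le_total 0 s with hs | hs
    · have hanti : AntitoneOn h (Set.Ici 0) := by
        apply antitoneOn_of_deriv_nonpos (convex_Ici 0) hdiff.continuous.continuousOn
          hdiff.differentiableOn
        intro x hx
        rw [interior_Ici] at hx
        rw [(hhd x).deriv]
        calc h' x ≤ h' 0 := hh'anti (le_of_lt hx)
        _ = 0 := hh'0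
      calc h s ≤ h 0 := hanti Set.self_mem_Ici hs hs
      _ = 0 := hh0
    · have hmono : MonotoneOn h (Set.Iic 0) := by
        apply monotoneOn_of_deriv_nonneg (convex_Iic 0) hdiff.continuous.continuousOn
          hdiff.differentiableOn
        intro x hx
        rw [interior_Iic] at hx
        rw [(hhd x).deriv]
        calc (0:ℝ) = h' 0 := hh'0.symm
        _ ≤ h' x := hh'anti (le_of_lt hx)
      calc h s ≤ h 0 := hmono hs Set.self_mem_Iic hs
      _ = 0 := hh0
  have hlog : Real.log (D t) ≤ p * t + t ^ 2 / 8 := by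
    have := key t; simp only [hhdef] at this; linarith
  have hDt : D t ≤ Real.exp (p * t + t ^ 2 / 8) := by
    calc D t = Real.exp (Real.log (D t)) := (Real.exp_log (hD t)).symm
    _ ≤ _ := Real.exp_le_exp.mpr hlog
  have e1 : Real.exp (t * (0 - p)) = Real.exp (-(p * t)) := by ring_nf
  have e2 : Real.exp (t * (1 - p)) = Real.exp (-(p * t)) * Real.exp t := by
    rw [← Real.exp_add]; ring_nf
  calc (1 - p) * Real.exp (t * (0 - p)) + p * Real.exp (t * (1 - p))
      = Real.exp (-(p * t)) * D t := by rw [e1, e2, hDdef]; ring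
    _ ≤ Real.exp (-(p * t)) * Real.exp (p * t + t ^ 2 / 8) :=
        mul_le_mul_of_nonneg_left hDt (Real.exp_pos _).le
    _ = Real.exp (t ^ 2 / 8) := by rw [← Real.exp_add]; ring_nf

lemma iIndep_precomp {Ω ι ι' : Type*} [MeasurableSpace Ω] {μ : Measure Ω}
    [IsProbabilityMeasure μ]
    {f : ι → Ω → ℝ} (h : iIndepFun f μ)
    (e : ι' → ι) (he : Function.Injective e) :
    iIndepFun (fun j => f (e j)) μ := by
  classical
  rw [iIndepFun_iff_measure_inter_preimage_eq_mul] at h ⊢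
  intro S sets hsets
  set sets' : ι → Set ℝ := Function.extend e sets (fun _ => Set.univ) with hs'
  have hext : ∀ j, sets' (e j) = sets j := fun j => he.extend_apply _ _ j
  have := h (S.map ⟨e, he⟩) (sets := sets') ?_
  · calc μ (⋂ j ∈ S, f (e j) ⁻¹' sets j)
        = μ (⋂ i ∈ S.map ⟨e, he⟩, f i ⁻¹' sets' i) := by
          congr 1
          ext ω
          simp only [Set.mem_iInter, Finset.mem_map, Function.Embedding.coeFn_mk]
          constructor
          · rintro hw i ⟨j, hj, rfl⟩
            rw [hext]; exact hw j hj
          · intro hw j hj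
            have := hw (e j) ⟨j, hj, rfl⟩
            rwa [hext] at this
      _ = ∏ i ∈ S.map ⟨e, he⟩, μ (f i ⁻¹' sets' i) := this
      _ = ∏ j ∈ S, μ (f (e j) ⁻¹' sets j) := by
          rw [Finset.prod_map]
          exact Finset.prod_congr rfl fun j hj => by rw [Function.Embedding.coeFn_mk, hext]
  · intro i hi
    rcases Finset.mem_map.mp hi with ⟨j, hj, rfl⟩
    rw [Function.Embedding.coeFn_mk, hext]
    exact hsets j hj

lemma hoeff_ecdf {Ω : Type*} [MeasurableSpace Ω] (Pr : Measure Ω) [IsProbabilityMeasure Pr]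
    {m : ℕ} (hm : 0 < m) (Z : Fin m → Ω → ℝ) (hZm : ∀ i, Measurable (Z i))
    (hindep : iIndepFun Z Pr)
    (ρ : Measure ℝ) [IsProbabilityMeasure ρ] (hZ : ∀ i, Measure.map (Z i) Pr = ρ)
    (x ε : ℝ) (hε : 0 < ε) :
    (Pr {ω | ε < |ecdfFin Z ω x - (ρ (Set.Iic x)).toReal|}).toReal
      ≤ 2 * Real.exp (-2 * m * ε ^ 2) := by
  set p := (ρ (Set.Iic x)).toReal with hpdef
  have hp0 : 0 ≤ p := ENNReal.toReal_nonneg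
  have hp1 : p ≤ 1 := by
    have h1 : ρ (Set.Iic x) ≤ 1 := prob_le_one
    calc p ≤ (1 : ENNReal).toReal := ENNReal.toReal_mono ENNReal.one_ne_top h1
    _ = 1 := by simp
  set φ : ℝ → ℝ := fun y => (if y ≤ x then (1 : ℝ) else 0) - p with hφdef
  have hφm : Measurable φ := by
    apply Measurable.sub _ measurable_const
    exact Measurable.ite measurableSet_Iic measurable_const measurable_const
  have hφb : ∀ y, |φ y| ≤ 2 := by
    intro y
    simp only [hφdef]
    split_ifs with hyx <;> rw [abs_le] <;> constructor <;> linarith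
  set V : Fin m → Ω → ℝ := fun i => φ ∘ Z i with hVdef
  have hVm : ∀ i, Measurable (V i) := fun i => hφm.comp (hZm i)
  have hVindep : iIndepFun V Pr := hindep.comp (fun _ => φ) (fun _ => hφm)
  have hint : ∀ (t : ℝ) (i : Fin m), Integrable (fun ω => Real.exp (t * V i ω)) Pr := by
    intro t i
    refine (integrable_const (Real.exp (|t| * 2))).mono'
      ((hVm i).const_mul t).exp.aestronglyMeasurable (ae_of_all _ fun ω => ?_)
    rw [Real.norm_eq_abs, Real.abs_exp]
    apply Real.exp_le_exp.mpr
    calc t * V i ω ≤ |t * V i ω| := le_abs_self _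
    _ = |t| * |V i ω| := abs_mul _ _
    _ ≤ |t| * 2 := mul_le_mul_of_nonneg_left (hφb _) (abs_nonneg t)
  have hmgf : ∀ (t : ℝ) (i : Fin m), mgf (V i) Pr t
      = (1 - p) * Real.exp (t * (0 - p)) + p * Real.exp (t * (1 - p)) := by
    intro t i
    have hmap : mgf (V i) Pr t = ∫ y, Real.exp (t * φ y) ∂ρ := by
      rw [mgf, ← hZ i]
      exact (integral_map (hZm i).aemeasurable
        ((hφm.const_mul t).exp).aestronglyMeasurable).symm
    rw [hmap]
    have hfun : ∀ y : ℝ, Real.exp (t * φ y) =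
        Set.indicator (Set.Iic x)
          (fun _ => Real.exp (t * (1 - p)) - Real.exp (t * (0 - p))) y
          + Real.exp (t * (0 - p)) := by
      intro y
      by_cases hy : y ≤ x
      · rw [Set.indicator_of_mem (Set.mem_Iic.mpr hy)]
        simp only [hφdef, if_pos hy]
        ring
      · rw [Set.indicator_of_notMem (by simpa [Set.mem_Iic] using hy)]
        simp only [hφdef, if_neg hy]
        ring
    simp_rw [hfun]
    rw [integral_add ((integrable_const _).indicator measurableSet_Iic) (integrable_const _),
      integral_indicator_const _ measurableSet_Iic, integral_const]
    simp only [measureReal_def, measure_univ, ENNReal.toReal_one, one_smul, smul_eq_mul, ← hpdef]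
    ring
  have hmgfle : ∀ (t : ℝ) (i : Fin m), mgf (V i) Pr t ≤ Real.exp (t ^ 2 / 8) := fun t i => by
    rw [hmgf t i]; exact bern_mgf_le_s8 hp0 hp1 t
  have hintT : ∀ t : ℝ, Integrable (fun ω => Real.exp (t * (∑ i, V i) ω)) Pr := fun t =>
    hVindep.integrable_exp_mul_sum hVm (fun i _ => hint t i)
  have hmgfT : ∀ t : ℝ, mgf (∑ i, V i) Pr t ≤ Real.exp ((m : ℝ) * (t ^ 2 / 8)) := by
    intro t
    rw [hVindep.mgf_sum hVm Finset.univ]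
    calc ∏ i, mgf (V i) Pr t ≤ ∏ _i : Fin m, Real.exp (t ^ 2 / 8) :=
        Finset.prod_le_prod (fun i _ => mgf_nonneg) (fun i _ => hmgfle t i)
    _ = Real.exp ((m : ℝ) * (t ^ 2 / 8)) := by
        rw [Finset.prod_const, ← Real.exp_nat_mul]
        simp [Finset.card_univ]
  have hup : (Pr {ω | (m : ℝ) * ε ≤ (∑ i, V i) ω}).toReal ≤ Real.exp (-2 * m * ε ^ 2) := by
    refine (measure_ge_le_exp_mul_mgf ((m : ℝ) * ε) (t := 4 * ε) (by positivity)
      (hintT _)).trans ?_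
    calc Real.exp (-(4 * ε) * ((m : ℝ) * ε)) * mgf (∑ i, V i) Pr (4 * ε)
        ≤ Real.exp (-(4 * ε) * ((m : ℝ) * ε)) * Real.exp ((m : ℝ) * ((4 * ε) ^ 2 / 8)) :=
          mul_le_mul_of_nonneg_left (hmgfT _) (Real.exp_pos _).le
    _ = Real.exp (-2 * m * ε ^ 2) := by rw [← Real.exp_add]; congr 1; ring
  have hlo : (Pr {ω | (∑ i, V i) ω ≤ -((m : ℝ) * ε)}).toReal ≤ Real.exp (-2 * m * ε ^ 2) := by
    refine (measure_le_le_exp_mul_mgf (-((m : ℝ) * ε)) (t := -(4 * ε)) (by linarith)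
      (hintT _)).trans ?_
    calc Real.exp (-(-(4 * ε)) * -((m : ℝ) * ε)) * mgf (∑ i, V i) Pr (-(4 * ε))
        ≤ Real.exp (-(-(4 * ε)) * -((m : ℝ) * ε)) * Real.exp ((m : ℝ) * ((-(4 * ε)) ^ 2 / 8)) :=
          mul_le_mul_of_nonneg_left (hmgfT _) (Real.exp_pos _).le
    _ = Real.exp (-2 * m * ε ^ 2) := by rw [← Real.exp_add]; congr 1; ring
  have hm' : (0 : ℝ) < m := by exact_mod_cast hm
  have hsub : {ω | ε < |ecdfFin Z ω x - p|} ⊆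
      {ω | (m : ℝ) * ε ≤ (∑ i, V i) ω} ∪ {ω | (∑ i, V i) ω ≤ -((m : ℝ) * ε)} := by
    intro ω hω
    simp only [Set.mem_setOf_eq] at hω
    have hT : (∑ i, V i) ω = (m : ℝ) * (ecdfFin Z ω x - p) := by
      rw [Finset.sum_apply]
      simp only [hVdef, hφdef, Function.comp_apply, ecdfFin]
      rw [Finset.sum_sub_distrib, Finset.sum_const, Finset.card_univ, Fintype.card_fin]
      field_simp
      rw [nsmul_eq_mul]
    rcases lt_abs.mp hω with h | h
    · left
      simp only [Set.mem_setOf_eq, hT]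
      nlinarith
    · right
      simp only [Set.mem_setOf_eq, hT]
      nlinarith
  calc (Pr {ω | ε < |ecdfFin Z ω x - p|}).toReal
      ≤ (Pr ({ω | (m : ℝ) * ε ≤ (∑ i, V i) ω} ∪ {ω | (∑ i, V i) ω ≤ -((m : ℝ) * ε)})).toReal :=
        ENNReal.toReal_mono (measure_ne_top _ _) (measure_mono hsub)
    _ ≤ (Pr {ω | (m : ℝ) * ε ≤ (∑ i, V i) ω} + Pr {ω | (∑ i, V i) ω ≤ -((m : ℝ) * ε)}).toReal :=
        ENNReal.toReal_mono
          (ENNReal.add_ne_top.mpr ⟨measure_ne_top _ _, measure_ne_top _ _⟩)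
          (measure_union_le _ _)
    _ = (Pr {ω | (m : ℝ) * ε ≤ (∑ i, V i) ω}).toReal
          + (Pr {ω | (∑ i, V i) ω ≤ -((m : ℝ) * ε)}).toReal :=
        ENNReal.toReal_add (measure_ne_top _ _) (measure_ne_top _ _)
    _ ≤ Real.exp (-2 * m * ε ^ 2) + Real.exp (-2 * m * ε ^ 2) := add_le_add hup hlo
    _ = 2 * Real.exp (-2 * m * ε ^ 2) := by ring

/-- **Theorem 5 (two-sample KS Type II error bound).** -/
theorem stmt_8
    {Ω : Type*} [MeasurableSpace Ω] (Pr : Measure Ω) [IsProbabilityMeasure Pr]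
    (μ ν : Measure ℝ) [IsProbabilityMeasure μ] [IsProbabilityMeasure ν]
    {N n : ℕ} (hN0 : 0 < N) (hn0 : 0 < n)
    (X : Fin N → Ω → ℝ) (Y : Fin n → Ω → ℝ)
    (hXm : ∀ i, Measurable (X i)) (hYm : ∀ j, Measurable (Y j))
    (hindep : iIndepFun (Sum.elim X Y) Pr)
    (hX : ∀ i, Measure.map (X i) Pr = μ) (hY : ∀ j, Measure.map (Y j) Pr = ν)
    (α : ℝ) (hα : α ∈ Set.Ioo (0 : ℝ) 1)
    -- `KS` is the Kolmogorov–Smirnov distance between the CDFs `F^θ` and `F^{θ₀}`.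
    (KS : ℝ) (hKS : KS = ⨆ x : ℝ, |(ν (Set.Iic x)).toReal - (μ (Set.Iic x)).toReal|)
    (hKSpos : 0 < KS)
    (ε₁ ε₂ : ℝ) (hε₁ : 0 < ε₁) (hε₂ : 0 < ε₂) (hεsum : ε₁ + ε₂ < KS)
    (hNlarge : ((n : ℝ) * N) / ((n : ℝ) + N) >
      (-(1 / 2) * Real.log (α / 2)) / (KS - ε₁ - ε₂) ^ 2) :
    (Pr {ω | (⨆ x : ℝ, |ecdfFin Y ω x - ecdfFin X ω x|) ≤
        Real.sqrt (((n : ℝ) + N) / ((n : ℝ) * N)) *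
          Real.sqrt (-(1 / 2) * Real.log (α / 2))}).toReal
      ≤ 2 * (Real.exp (-2 * n * ε₁ ^ 2) + Real.exp (-2 * N * ε₂ ^ 2)) := by
  obtain ⟨hα0, hα1⟩ := hα
  set L := -(1 / 2 : ℝ) * Real.log (α / 2) with hLdef
  have hL : 0 < L := by
    have hlog : Real.log (α / 2) < 0 := Real.log_neg (by linarith) (by linarith)
    simp only [hLdef]; nlinarith
  set c := Real.sqrt (((n : ℝ) + N) / ((n : ℝ) * N)) * Real.sqrt L with hcdef
  have hn' : (0 : ℝ) < n := Nat.cast_pos.mpr hn0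
  have hN' : (0 : ℝ) < N := Nat.cast_pos.mpr hN0
  have hK' : 0 < KS - ε₁ - ε₂ := by linarith
  have hc0 : 0 ≤ c := by positivity
  have hc2 : c ^ 2 = (((n : ℝ) + N) / ((n : ℝ) * N)) * L := by
    rw [hcdef, mul_pow, Real.sq_sqrt (by positivity), Real.sq_sqrt hL.le]
  have h1 : L < (((n : ℝ) * N) / ((n : ℝ) + N)) * (KS - ε₁ - ε₂) ^ 2 :=
    (div_lt_iff₀ (by positivity)).mp hNlarge
  have hc2' : c ^ 2 < (KS - ε₁ - ε₂) ^ 2 := by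
    rw [hc2]
    have hinv : (((n : ℝ) + N) / ((n : ℝ) * N)) = ((((n : ℝ) * N) / ((n : ℝ) + N)))⁻¹ := by
      rw [inv_div]
    rw [hinv, inv_mul_eq_div, div_lt_iff₀ (by positivity)]
    nlinarith
  have hclt : c < KS - ε₁ - ε₂ := lt_of_pow_lt_pow_left₀ 2 hK'.le hc2'
  have hx : ε₁ + ε₂ + c < KS := by linarith
  rw [hKS] at hx
  obtain ⟨x₀, hx₀⟩ := exists_lt_of_lt_ciSup hx
  have hecdf : ∀ {M : ℕ}, 0 < M → ∀ (Z : Fin M → Ω → ℝ) (ω : Ω) (x : ℝ),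
      0 ≤ ecdfFin Z ω x ∧ ecdfFin Z ω x ≤ 1 := by
    intro M hM Z ω x
    have hM' : (0 : ℝ) < M := Nat.cast_pos.mpr hM
    constructor
    · apply mul_nonneg (by positivity)
      apply Finset.sum_nonneg
      intro i _
      split_ifs <;> norm_num
    · have hS : (∑ i, if Z i ω ≤ x then (1 : ℝ) else 0) ≤ M := by
        calc (∑ i, if Z i ω ≤ x then (1 : ℝ) else 0) ≤ ∑ _i : Fin M, (1 : ℝ) :=
            Finset.sum_le_sum (fun i _ => by split_ifs <;> norm_num)
        _ = M := by simp
      calc ecdfFin Z ω x ≤ (M : ℝ)⁻¹ * M := mul_le_mul_of_nonneg_left hS (by positivity)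
      _ = 1 := inv_mul_cancel₀ hM'.ne'
  have hbdd : ∀ ω, BddAbove (Set.range fun x => |ecdfFin Y ω x - ecdfFin X ω x|) := by
    intro ω
    refine ⟨2, ?_⟩
    rintro v ⟨x, rfl⟩
    obtain ⟨h1, h2⟩ := hecdf hn0 Y ω x
    obtain ⟨h3, h4⟩ := hecdf hN0 X ω x
    rw [abs_le]
    constructor <;> linarith
  have hYindep : iIndepFun Y Pr :=
    iIndep_precomp hindep Sum.inr Sum.inr_injective
  have hXindep : iIndepFun X Pr :=
    iIndep_precomp hindep Sum.inl Sum.inl_injective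
  have hB := hoeff_ecdf Pr hn0 Y hYm hYindep ν hY x₀ ε₁ hε₁
  have hC := hoeff_ecdf Pr hN0 X hXm hXindep μ hX x₀ ε₂ hε₂
  have hsub : {ω | (⨆ x : ℝ, |ecdfFin Y ω x - ecdfFin X ω x|) ≤ c} ⊆
      {ω | ε₁ < |ecdfFin Y ω x₀ - (ν (Set.Iic x₀)).toReal|} ∪
      {ω | ε₂ < |ecdfFin X ω x₀ - (μ (Set.Iic x₀)).toReal|} := by
    intro ω hω
    simp only [Set.mem_setOf_eq] at hω
    have hle : |ecdfFin Y ω x₀ - ecdfFin X ω x₀| ≤ c :=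
      le_trans (le_ciSup (hbdd ω) x₀) hω
    by_contra hnot
    simp only [Set.mem_union, Set.mem_setOf_eq, not_or, not_lt] at hnot
    obtain ⟨h1, h2⟩ := hnot
    have t1 := abs_sub_le ((ν (Set.Iic x₀)).toReal) (ecdfFin Y ω x₀) ((μ (Set.Iic x₀)).toReal)
    have t2 := abs_sub_le (ecdfFin Y ω x₀) (ecdfFin X ω x₀) ((μ (Set.Iic x₀)).toReal)
    have t3 : |(ν (Set.Iic x₀)).toReal - ecdfFin Y ω x₀| =
        |ecdfFin Y ω x₀ - (ν (Set.Iic x₀)).toReal| := abs_sub_comm _ _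
    linarith
  calc (Pr {ω | (⨆ x : ℝ, |ecdfFin Y ω x - ecdfFin X ω x|) ≤ c}).toReal
      ≤ (Pr ({ω | ε₁ < |ecdfFin Y ω x₀ - (ν (Set.Iic x₀)).toReal|} ∪
          {ω | ε₂ < |ecdfFin X ω x₀ - (μ (Set.Iic x₀)).toReal|})).toReal :=
        ENNReal.toReal_mono (measure_ne_top _ _) (measure_mono hsub)
    _ ≤ (Pr {ω | ε₁ < |ecdfFin Y ω x₀ - (ν (Set.Iic x₀)).toReal|} +
          Pr {ω | ε₂ < |ecdfFin X ω x₀ - (μ (Set.Iic x₀)).toReal|}).toReal :=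
        ENNReal.toReal_mono
          (ENNReal.add_ne_top.mpr ⟨measure_ne_top _ _, measure_ne_top _ _⟩)
          (measure_union_le _ _)
    _ = (Pr {ω | ε₁ < |ecdfFin Y ω x₀ - (ν (Set.Iic x₀)).toReal|}).toReal +
          (Pr {ω | ε₂ < |ecdfFin X ω x₀ - (μ (Set.Iic x₀)).toReal|}).toReal :=
        ENNReal.toReal_add (measure_ne_top _ _) (measure_ne_top _ _)
    _ ≤ 2 * Real.exp (-2 * n * ε₁ ^ 2) + 2 * Real.exp (-2 * N * ε₂ ^ 2) := add_le_add hB hC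
    _ = 2 * (Real.exp (-2 * n * ε₁ ^ 2) + Real.exp (-2 * N * ε₂ ^ 2)) := by ring
end

section
/- Let 𝓔̂_m^v = { θ_i : sup_{x∈ℝ} |F_n^{θ_i}(x) − F_N^{θ₀}(x)| ≤ √((n+N)/(nN)) · √(−(1/2)log(α/2)) } be the two-sample eligibility set constructed from an i.i.d. real sample of size N from F^{θ₀}, independent i.i.d. simulated samples of size n from each F^{θ_i}, and candidates θ₁,…,θ_m. If m = o(N) and n = Ω(N) as N → ∞, then lim_{m,n,N→∞} ℙ( ∃ i ∈ {1,…,m} such that sup_{x∈ℝ} |F^{θ_i}(x) − F^{θ₀}(x)| > √(log m / m) and θ_i ∈ 𝓔̂_m^v ) = 0. -/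
open MeasureTheory ProbabilityTheory Filter

open Real in

lemma iIndepFun_precomp_inj {Ω ι ι' : Type*} [MeasurableSpace Ω] {Pr : Measure Ω}
    {f : ι → Ω → ℝ} (h : iIndepFun f Pr)
    (e : ι' → ι) (he : Function.Injective e) :
    iIndepFun (fun j => f (e j)) Pr := by
  classical
  rw [iIndepFun_iff_measure_inter_preimage_eq_mul] at h ⊢
  intro S sets hsets
  set g : ι → Set ℝ := fun i => if hi : ∃ j ∈ S, e j = i then sets hi.choose else Set.univ with hg
  have key : ∀ j ∈ S, g (e j) = sets j := by
    intro j hj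
    have hi : ∃ j' ∈ S, e j' = e j := ⟨j, hj, rfl⟩
    have := hi.choose_spec
    have hj' : hi.choose = j := he this.2
    simp only [hg, dif_pos hi, hj']
  have h1 : (⋂ j ∈ S, f (e j) ⁻¹' sets j) = ⋂ i ∈ S.image e, f i ⁻¹' g i := by
    rw [Finset.set_biInter_finset_image]
    exact Set.iInter₂_congr fun j hj => by rw [key j hj]
  have h2 : ∀ i ∈ S.image e, MeasurableSet (g i) := by
    intro i hi
    obtain ⟨j, hj, rfl⟩ := Finset.mem_image.mp hi
    rw [key j hj]; exact hsets j hj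
  rw [h1, h (S.image e) h2, Finset.prod_image (fun a _ b _ hab => he hab)]
  exact Finset.prod_congr rfl fun j hj => by rw [key j hj]

lemma integral_indicator_le {Ω : Type*} [MeasurableSpace Ω] (Pr : Measure Ω)
    [IsProbabilityMeasure Pr] (ρ : Measure ℝ) (Z : Ω → ℝ) (hZm : Measurable Z)
    (hZ : Measure.map Z Pr = ρ) (x : ℝ) :
    ∫ ω, (if Z ω ≤ x then (1:ℝ) else 0) ∂Pr = (ρ (Set.Iic x)).toReal := by
  have hs : MeasurableSet (Z ⁻¹' Set.Iic x) := hZm measurableSet_Iic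
  have : (fun ω => if Z ω ≤ x then (1:ℝ) else 0)
      = Set.indicator (Z ⁻¹' Set.Iic x) (fun _ => (1:ℝ)) := by
    ext ω; by_cases h : Z ω ≤ x <;> simp [Set.indicator_apply, h]
  rw [this, integral_indicator_const _ hs, ← hZ, Measure.map_apply hZm measurableSet_Iic]
  simp
  rfl

open Real in

lemma exp_quad_upper {t : ℝ} (h0 : 0 ≤ t) (h1 : t ≤ 1/2) :
    Real.exp t - 1 - t ≤ 2 * t ^ 2 := by
  have h2 : 1 - t ≤ Real.exp (-t) := by linarith [Real.add_one_le_exp (-t)]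
  have h3 : Real.exp t * (1 - t) ≤ 1 := by
    calc Real.exp t * (1 - t) ≤ Real.exp t * Real.exp (-t) :=
          mul_le_mul_of_nonneg_left h2 (Real.exp_pos t).le
      _ = 1 := by rw [← Real.exp_add]; simp
  nlinarith [Real.exp_pos t, sq_nonneg t]

lemma exp_quad_lower {t : ℝ} (h0 : 0 ≤ t) :
    Real.exp (-t) - 1 + t ≤ t ^ 2 := by
  have h2 : 1 + t ≤ Real.exp t := by linarith [Real.add_one_le_exp t]
  have h3 : Real.exp (-t) * (1 + t) ≤ 1 := by
    calc Real.exp (-t) * (1 + t) ≤ Real.exp (-t) * Real.exp t :=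
          mul_le_mul_of_nonneg_left h2 (Real.exp_pos _).le
      _ = 1 := by rw [← Real.exp_add]; simp
  nlinarith [Real.exp_pos (-t), sq_nonneg t]

lemma bernoulli_chernoff {Ω : Type*} [MeasurableSpace Ω] (Pr : Measure Ω)
    [IsProbabilityMeasure Pr] (V : ℕ → Ω → ℝ) (M : ℕ)
    (hmeas : ∀ j, Measurable (V j))
    (h01 : ∀ j ω, V j ω = 0 ∨ V j ω = 1)
    (hind : iIndepFun V Pr)
    (p : ℝ) (hp : ∀ j, ∫ ω, V j ω ∂Pr = p)
    {δ : ℝ} (hδ0 : 0 < δ) (hδ1 : δ ≤ 1) :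
    (Pr {ω | (M:ℝ) * δ ≤ |∑ j ∈ Finset.range M, V j ω - (M:ℝ) * p|}).toReal
      ≤ 2 * Real.exp (-((M:ℝ) * δ ^ 2) / 8) := by
  have hVint : ∀ j, Integrable (V j) Pr := fun j =>
    (integrable_const (1:ℝ)).mono' (hmeas j).aestronglyMeasurable
      (ae_of_all _ fun ω => by rcases h01 j ω with h | h <;> simp [h])
  have hp0 : 0 ≤ p := by
    rw [← hp 0]
    exact integral_nonneg fun ω => by rcases h01 0 ω with h | h <;> simp [h]
  have hp1 : p ≤ 1 := by
    rw [← hp 0]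
    calc ∫ ω, V 0 ω ∂Pr ≤ ∫ _, (1:ℝ) ∂Pr := by
          refine integral_mono (hVint 0) (integrable_const 1) fun ω => ?_
          rcases h01 0 ω with h | h <;> simp [h]
      _ = 1 := by simp
  have hexpeq : ∀ (t : ℝ) (j : ℕ), (fun ω => Real.exp (t * V j ω))
      = fun ω => 1 + (Real.exp t - 1) * V j ω := by
    intro t j; ext ω
    rcases h01 j ω with h | h <;> simp [h]
  have hint : ∀ (t : ℝ) (j : ℕ), Integrable (fun ω => Real.exp (t * V j ω)) Pr := by
    intro t j; rw [hexpeq]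
    exact (integrable_const 1).add ((hVint j).const_mul _)
  have hmgf : ∀ (t : ℝ) (j : ℕ), mgf (V j) Pr t = 1 + (Real.exp t - 1) * p := by
    intro t j
    rw [mgf, hexpeq, integral_add (integrable_const 1) ((hVint j).const_mul _),
      MeasureTheory.integral_const_mul, hp j]
    simp
  have hq0 : ∀ t : ℝ, 0 ≤ 1 + (Real.exp t - 1) * p := by
    intro t; nlinarith [Real.exp_pos t]
  have hmgfS : ∀ t : ℝ, mgf (∑ j ∈ Finset.range M, V j) Pr t
      ≤ Real.exp ((M:ℝ) * ((Real.exp t - 1) * p)) := by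
    intro t
    rw [hind.mgf_sum hmeas]
    calc ∏ j ∈ Finset.range M, mgf (V j) Pr t = (1 + (Real.exp t - 1) * p) ^ M := by
          rw [Finset.prod_congr rfl fun j _ => hmgf t j, Finset.prod_const, Finset.card_range]
      _ ≤ Real.exp ((Real.exp t - 1) * p) ^ M :=
          pow_le_pow_left₀ (hq0 t) (by linarith [Real.add_one_le_exp ((Real.exp t - 1) * p)]) M
      _ = Real.exp ((M:ℝ) * ((Real.exp t - 1) * p)) := by rw [← Real.exp_nat_mul]
  have hintS : ∀ t : ℝ, Integrable (fun ω => Real.exp (t * (∑ j ∈ Finset.range M, V j) ω)) Pr :=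
    fun t => hind.integrable_exp_mul_sum hmeas fun j _ => hint t j
  have hM0 : (0:ℝ) ≤ (M:ℝ) := Nat.cast_nonneg M
  -- upper tail
  have hupper : (Pr {ω | (M:ℝ) * p + (M:ℝ) * δ ≤ (∑ j ∈ Finset.range M, V j) ω}).toReal
      ≤ Real.exp (-((M:ℝ) * δ ^ 2) / 8) := by
    refine (measure_ge_le_exp_mul_mgf (t := δ/4) ((M:ℝ) * p + (M:ℝ) * δ)
      (by positivity) (hintS _)).trans ?_
    calc Real.exp (-(δ/4) * ((M:ℝ) * p + (M:ℝ) * δ)) * mgf (∑ j ∈ Finset.range M, V j) Pr (δ/4)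
        ≤ Real.exp (-(δ/4) * ((M:ℝ) * p + (M:ℝ) * δ))
            * Real.exp ((M:ℝ) * ((Real.exp (δ/4) - 1) * p)) :=
          mul_le_mul_of_nonneg_left (hmgfS _) (Real.exp_pos _).le
      _ = Real.exp (-(δ/4) * ((M:ℝ) * p + (M:ℝ) * δ) + (M:ℝ) * ((Real.exp (δ/4) - 1) * p)) := by
          rw [← Real.exp_add]
      _ ≤ Real.exp (-((M:ℝ) * δ ^ 2) / 8) := by
          apply Real.exp_le_exp.mpr
          have h3 : Real.exp (δ/4) - 1 - δ/4 ≤ 2 * (δ/4) ^ 2 :=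
            exp_quad_upper (by positivity) (by linarith)
          have h2 : p * (Real.exp (δ/4) - 1 - δ/4) ≤ 2 * (δ/4) ^ 2 := by
            nlinarith [Real.add_one_le_exp (δ/4)]
          nlinarith [mul_le_mul_of_nonneg_left h2 hM0]
  -- lower tail
  have hlower : (Pr {ω | (∑ j ∈ Finset.range M, V j) ω ≤ (M:ℝ) * p - (M:ℝ) * δ}).toReal
      ≤ Real.exp (-((M:ℝ) * δ ^ 2) / 8) := by
    refine (measure_le_le_exp_mul_mgf (t := -(δ/4)) ((M:ℝ) * p - (M:ℝ) * δ)
      (by linarith) (hintS _)).trans ?_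
    calc Real.exp (-(-(δ/4)) * ((M:ℝ) * p - (M:ℝ) * δ)) * mgf (∑ j ∈ Finset.range M, V j) Pr (-(δ/4))
        ≤ Real.exp ((δ/4) * ((M:ℝ) * p - (M:ℝ) * δ))
            * Real.exp ((M:ℝ) * ((Real.exp (-(δ/4)) - 1) * p)) := by
          rw [neg_neg]
          exact mul_le_mul_of_nonneg_left (hmgfS _) (Real.exp_pos _).le
      _ = Real.exp ((δ/4) * ((M:ℝ) * p - (M:ℝ) * δ) + (M:ℝ) * ((Real.exp (-(δ/4)) - 1) * p)) := by
          rw [← Real.exp_add]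
      _ ≤ Real.exp (-((M:ℝ) * δ ^ 2) / 8) := by
          apply Real.exp_le_exp.mpr
          have h3 : Real.exp (-(δ/4)) - 1 + δ/4 ≤ (δ/4) ^ 2 := exp_quad_lower (by positivity)
          have h2 : p * (Real.exp (-(δ/4)) - 1 + δ/4) ≤ (δ/4) ^ 2 := by
            nlinarith [Real.add_one_le_exp (-(δ/4))]
          nlinarith [mul_le_mul_of_nonneg_left h2 hM0]
  -- union bound
  have hsub : {ω | (M:ℝ) * δ ≤ |∑ j ∈ Finset.range M, V j ω - (M:ℝ) * p|}
      ⊆ {ω | (M:ℝ) * p + (M:ℝ) * δ ≤ (∑ j ∈ Finset.range M, V j) ω}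
        ∪ {ω | (∑ j ∈ Finset.range M, V j) ω ≤ (M:ℝ) * p - (M:ℝ) * δ} := by
    intro ω hω
    simp only [Set.mem_setOf_eq, Set.mem_union, Finset.sum_apply] at *
    rcases le_abs.mp hω with h | h
    · left; linarith
    · right; linarith
  calc (Pr {ω | (M:ℝ) * δ ≤ |∑ j ∈ Finset.range M, V j ω - (M:ℝ) * p|}).toReal
      ≤ (Pr ({ω | (M:ℝ) * p + (M:ℝ) * δ ≤ (∑ j ∈ Finset.range M, V j) ω}
          ∪ {ω | (∑ j ∈ Finset.range M, V j) ω ≤ (M:ℝ) * p - (M:ℝ) * δ})).toReal :=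
        ENNReal.toReal_mono (measure_ne_top _ _) (measure_mono hsub)
    _ ≤ (Pr {ω | (M:ℝ) * p + (M:ℝ) * δ ≤ (∑ j ∈ Finset.range M, V j) ω}
          + Pr {ω | (∑ j ∈ Finset.range M, V j) ω ≤ (M:ℝ) * p - (M:ℝ) * δ}).toReal :=
        ENNReal.toReal_mono (ENNReal.add_ne_top.mpr ⟨measure_ne_top _ _, measure_ne_top _ _⟩)
          (measure_union_le _ _)
    _ = (Pr {ω | (M:ℝ) * p + (M:ℝ) * δ ≤ (∑ j ∈ Finset.range M, V j) ω}).toReal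
          + (Pr {ω | (∑ j ∈ Finset.range M, V j) ω ≤ (M:ℝ) * p - (M:ℝ) * δ}).toReal :=
        ENNReal.toReal_add (measure_ne_top _ _) (measure_ne_top _ _)
    _ ≤ 2 * Real.exp (-((M:ℝ) * δ ^ 2) / 8) := by linarith [hupper, hlower]

lemma ecdfSeq_mem_Icc {Ω : Type*} (Z : ℕ → Ω → ℝ) (M : ℕ) (ω : Ω) (x : ℝ) :
    ecdfSeq Z M ω x ∈ Set.Icc (0:ℝ) 1 := by
  constructor
  · refine mul_nonneg (by positivity) (Finset.sum_nonneg fun i _ => ?_)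
    split <;> norm_num
  · rcases Nat.eq_zero_or_pos M with h | h
    · simp [ecdfSeq, h]
    · rw [ecdfSeq]
      have hs : ∑ i ∈ Finset.range M, (if Z i ω ≤ x then (1:ℝ) else 0) ≤ (M:ℝ) := by
        calc ∑ i ∈ Finset.range M, (if Z i ω ≤ x then (1:ℝ) else 0)
            ≤ ∑ _i ∈ Finset.range M, (1:ℝ) :=
              Finset.sum_le_sum fun i _ => by split <;> norm_num
          _ = (M:ℝ) := by simp
      have hM0 : (0:ℝ) < (M:ℝ) := by exact_mod_cast h
      calc (M:ℝ)⁻¹ * ∑ i ∈ Finset.range M, (if Z i ω ≤ x then (1:ℝ) else 0)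
          ≤ (M:ℝ)⁻¹ * (M:ℝ) := mul_le_mul_of_nonneg_left hs (by positivity)
        _ = 1 := inv_mul_cancel₀ hM0.ne'

lemma chernoff_ecdf {Ω : Type*} [MeasurableSpace Ω] (Pr : Measure Ω)
    [IsProbabilityMeasure Pr] (ρ : Measure ℝ) [IsProbabilityMeasure ρ]
    (Z : ℕ → Ω → ℝ) (hZm : ∀ j, Measurable (Z j))
    (hind : iIndepFun Z Pr)
    (hZ : ∀ j, Measure.map (Z j) Pr = ρ) (K : ℕ) (hK : 1 ≤ K) (x : ℝ)
    {δ : ℝ} (hδ0 : 0 < δ) (hδ1 : δ ≤ 1) :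
    (Pr {ω | δ < |ecdfSeq Z K ω x - (ρ (Set.Iic x)).toReal|}).toReal
      ≤ 2 * Real.exp (-((K:ℝ) * δ ^ 2) / 8) := by
  classical
  set p : ℝ := (ρ (Set.Iic x)).toReal with hpdef
  set V : ℕ → Ω → ℝ := fun j ω => if Z j ω ≤ x then 1 else 0 with hVdef
  have hgm : Measurable (fun y : ℝ => if y ≤ x then (1:ℝ) else 0) := by
    exact Measurable.ite (show MeasurableSet {y : ℝ | y ≤ x} from measurableSet_Iic)
      measurable_const measurable_const
  have hVm : ∀ j, Measurable (V j) := fun j => hgm.comp (hZm j)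
  have hVind : iIndepFun V Pr :=
    hind.comp (fun _ => fun y : ℝ => if y ≤ x then (1:ℝ) else 0) fun _ => hgm
  have hVp : ∀ j, ∫ ω, V j ω ∂Pr = p := fun j =>
    integral_indicator_le Pr ρ (Z j) (hZm j) (hZ j) x
  have h01 : ∀ j ω, V j ω = 0 ∨ V j ω = 1 := fun j ω => by
    by_cases h : Z j ω ≤ x <;> simp [hVdef, h]
  have hmain := bernoulli_chernoff Pr V K hVm h01 hVind p hVp hδ0 hδ1
  refine le_trans (ENNReal.toReal_mono (measure_ne_top _ _) (measure_mono ?_)) hmain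
  intro ω hω
  simp only [Set.mem_setOf_eq] at *
  have hK0 : (0:ℝ) < (K:ℝ) := by exact_mod_cast hK
  have hrw : ∑ j ∈ Finset.range K, V j ω - (K:ℝ) * p = (K:ℝ) * (ecdfSeq Z K ω x - p) := by
    rw [show ecdfSeq Z K ω x = (K:ℝ)⁻¹ * ∑ j ∈ Finset.range K, V j ω from rfl]
    field_simp
  rw [hrw, abs_mul, abs_of_pos hK0]
  exact mul_le_mul_of_nonneg_left hω.le hK0.le

set_option maxHeartbeats 1000000 in
/-- **Corollary 3.** If `m = o(N)` and `n = Ω(N)`, then the probability that some candidate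
`θᵢ` with `sup_x |F^{θᵢ}(x) - F^{θ₀}(x)| > √(log m / m)` lies in the eligibility set `𝓔̂_m^v`
tends to `0` as `m, n, N → ∞`. -/
theorem stmt_11
    {Ω : Type*} [MeasurableSpace Ω] (Pr : Measure Ω) [IsProbabilityMeasure Pr]
    (μ : Measure ℝ) [IsProbabilityMeasure μ]
    (ν : ℕ → Measure ℝ) [∀ i, IsProbabilityMeasure (ν i)]
    (X : ℕ → Ω → ℝ) (Y : ℕ → ℕ → Ω → ℝ)
    (hXm : ∀ i, Measurable (X i)) (hYm : ∀ i j, Measurable (Y i j))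
    (hindep : iIndepFun
      (Sum.elim X (fun p : ℕ × ℕ => Y p.1 p.2)) Pr)
    (hX : ∀ k, Measure.map (X k) Pr = μ) (hY : ∀ i j, Measure.map (Y i j) Pr = ν i)
    (α : ℝ) (hα : α ∈ Set.Ioo (0 : ℝ) 1)
    (m n : ℕ → ℕ)
    (hm : Tendsto m atTop atTop) (hn : Tendsto n atTop atTop)
    -- `m = o(N)`
    (hmN : Tendsto (fun N => (m N : ℝ) / (N : ℝ)) atTop (nhds 0))
    -- `n = Ω(N)`
    (hnN : ∃ c > (0 : ℝ), ∀ᶠ N : ℕ in atTop, c * (N : ℝ) ≤ (n N : ℝ)) :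
    Tendsto (fun N =>
      (Pr {ω | ∃ i < m N,
        Real.sqrt (Real.log (m N) / (m N : ℝ)) <
          (⨆ x : ℝ, |(ν i (Set.Iic x)).toReal - (μ (Set.Iic x)).toReal|) ∧
        (⨆ x : ℝ, |ecdfSeq (Y i) (n N) ω x - ecdfSeq X N ω x|) ≤
          Real.sqrt (((n N : ℝ) + N) / ((n N : ℝ) * N)) *
            Real.sqrt (-(1 / 2) * Real.log (α / 2))}).toReal)
      atTop (nhds 0) := by
  classical
  obtain ⟨c, hc, hcN⟩ := hnN
  obtain ⟨hα0, hα1⟩ := hα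
  -- independence of subfamilies
  have hXindep : iIndepFun X Pr := by
    have h := iIndepFun_precomp_inj hindep Sum.inl Sum.inl_injective
    exact h
  have hYindep : ∀ i, iIndepFun (Y i) Pr := by
    intro i
    have hinj : Function.Injective (fun j : ℕ => (Sum.inr (i, j) : ℕ ⊕ ℕ × ℕ)) := by
      intro a b hab; simpa using hab
    have h := iIndepFun_precomp_inj hindep _ hinj
    exact h
  -- the constant C
  set C : ℝ := -(1 / 2) * Real.log (α / 2) with hCdef
  have hC : 0 < C := by
    have : Real.log (α / 2) < 0 := Real.log_neg (by linarith) (by linarith)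
    rw [hCdef]; linarith
  -- N / m N → ∞
  have hNm : Tendsto (fun N : ℕ => (N : ℝ) / (m N : ℝ)) atTop atTop := by
    have hpos : ∀ᶠ N : ℕ in atTop, (m N : ℝ) / (N : ℝ) ∈ Set.Ioi (0:ℝ) := by
      filter_upwards [hm.eventually_ge_atTop 1, eventually_ge_atTop 1] with N ha hb
      have h1 : (0:ℝ) < (m N : ℝ) := by exact_mod_cast ha
      have h2 : (0:ℝ) < (N : ℝ) := by exact_mod_cast hb
      exact div_pos h1 h2
    have h0 : Tendsto (fun N => (m N : ℝ) / (N : ℝ)) atTop (nhdsWithin 0 (Set.Ioi 0)) :=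
      tendsto_nhdsWithin_iff.mpr ⟨hmN, hpos⟩
    have h1 := h0.inv_tendsto_nhdsGT_zero
    have : (fun N : ℕ => ((m N : ℝ) / (N : ℝ))⁻¹) = fun N : ℕ => (N : ℝ) / (m N : ℝ) := by
      funext N; rw [inv_div]
    rwa [← this]
  have ev5 := hNm.eventually_ge_atTop (4 * (1 + 1/c) * C)
  have ev6 := hNm.eventually_ge_atTop (256 / min c 1)
  have hzero : Tendsto (fun N => 4 / (m N : ℝ)) atTop (nhds 0) :=
    Tendsto.div_atTop tendsto_const_nhds (tendsto_natCast_atTop_atTop.comp hm)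
  refine squeeze_zero' (Eventually.of_forall fun N => ENNReal.toReal_nonneg) ?_ hzero
  filter_upwards [hm.eventually_ge_atTop 3, hn.eventually_ge_atTop 1, hcN,
    eventually_ge_atTop 1, ev5, ev6] with N h1 h2 h3 h4 h5 h6
  -- abbreviations
  set M := m N with hMdef
  set K := n N with hKdef
  have hM0 : (0:ℝ) < (M:ℝ) := by exact_mod_cast (show 0 < M by omega)
  have hMR : (3:ℝ) ≤ (M:ℝ) := by exact_mod_cast h1
  have hK0 : (0:ℝ) < (K:ℝ) := by have : 0 < K := h2; exact_mod_cast this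
  have hN0 : (0:ℝ) < (N:ℝ) := by have : 0 < N := h4; exact_mod_cast this
  have hlogM : 1 ≤ Real.log (M:ℝ) := by
    rw [Real.le_log_iff_exp_le hM0]
    calc Real.exp 1 ≤ 2.7182818286 := Real.exp_one_lt_d9.le
      _ ≤ 3 := by norm_num
      _ ≤ (M:ℝ) := hMR
  set ε : ℝ := Real.sqrt (Real.log (M:ℝ) / (M:ℝ)) with hεdef
  have hεsq : ε ^ 2 = Real.log (M:ℝ) / (M:ℝ) := Real.sq_sqrt (by positivity)
  have hε0 : 0 < ε := Real.sqrt_pos.mpr (by positivity)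
  have hε1 : ε ≤ 1 := by
    rw [hεdef, show (1:ℝ) = Real.sqrt 1 by simp]
    apply Real.sqrt_le_sqrt
    rw [div_le_one hM0]
    linarith [Real.log_le_sub_one_of_pos hM0]
  -- the KS threshold is at most ε/2
  have h5' : 4 * (1 + 1/c) * C * (M:ℝ) ≤ (N:ℝ) := (le_div_iff₀ hM0).mp h5
  have hid : c * (1 + 1/c) = c + 1 := by field_simp
  have h5'' : 4 * (c + 1) * C * (M:ℝ) ≤ c * (N:ℝ) := by
    nlinarith [mul_le_mul_of_nonneg_left h5' hc.le]
  have ht : Real.sqrt (((K:ℝ) + (N:ℝ)) / ((K:ℝ) * (N:ℝ))) * Real.sqrt C ≤ ε / 2 := by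
    rw [← Real.sqrt_mul (by positivity)]
    have key1 : 4 * C * (M:ℝ) * ((K:ℝ) + (N:ℝ)) ≤ (K:ℝ) * (N:ℝ) := by
      have hA := mul_le_mul_of_nonneg_left h5'' hK0.le
      have hB := mul_le_mul_of_nonneg_left h3 (by positivity : (0:ℝ) ≤ 4 * C * (M:ℝ))
      nlinarith [hc, mul_pos hK0 hN0]
    have harg : ((K:ℝ) + (N:ℝ)) / ((K:ℝ) * (N:ℝ)) * C ≤ ε ^ 2 / 4 := by
      rw [hεsq, div_div, div_mul_eq_mul_div, div_le_div_iff₀ (by positivity) (by positivity)]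
      nlinarith [key1, mul_nonneg (mul_nonneg hK0.le hN0.le) (sub_nonneg.mpr hlogM)]
    calc Real.sqrt (((K:ℝ) + (N:ℝ)) / ((K:ℝ) * (N:ℝ)) * C) ≤ Real.sqrt (ε ^ 2 / 4) :=
          Real.sqrt_le_sqrt harg
      _ = ε / 2 := by
          rw [show ε ^ 2 / 4 = (ε / 2) ^ 2 by ring, Real.sqrt_sq (by positivity)]
  -- choose witness points
  have hchoice : ∀ i : ℕ, ε < (⨆ x : ℝ, |(ν i (Set.Iic x)).toReal - (μ (Set.Iic x)).toReal|) →
      ∃ x : ℝ, ε < |(ν i (Set.Iic x)).toReal - (μ (Set.Iic x)).toReal| := by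
    intro i hi
    by_contra h
    push_neg at h
    exact absurd (ciSup_le h) (not_le.mpr hi)
  set xi : ℕ → ℝ := fun i =>
    if h : ε < (⨆ x : ℝ, |(ν i (Set.Iic x)).toReal - (μ (Set.Iic x)).toReal|)
    then (hchoice i h).choose else 0 with hxidef
  have hxi : ∀ i, ε < (⨆ x : ℝ, |(ν i (Set.Iic x)).toReal - (μ (Set.Iic x)).toReal|) →
      ε < |(ν i (Set.Iic (xi i))).toReal - (μ (Set.Iic (xi i))).toReal| := by
    intro i h
    rw [hxidef]
    simp only [dif_pos h]
    exact (hchoice i h).choose_spec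
  -- the bad sets
  set A : ℕ → Set Ω := fun i =>
    {ω | ε/4 < |ecdfSeq (Y i) K ω (xi i) - (ν i (Set.Iic (xi i))).toReal|} with hAdef
  set B : ℕ → Set Ω := fun i =>
    {ω | ε/4 < |ecdfSeq X N ω (xi i) - (μ (Set.Iic (xi i))).toReal|} with hBdef
  -- inclusion
  have hsub : {ω | ∃ i < M,
      ε < (⨆ x : ℝ, |(ν i (Set.Iic x)).toReal - (μ (Set.Iic x)).toReal|) ∧
      (⨆ x : ℝ, |ecdfSeq (Y i) K ω x - ecdfSeq X N ω x|) ≤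
        Real.sqrt (((K:ℝ) + (N:ℝ)) / ((K:ℝ) * (N:ℝ))) * Real.sqrt C}
      ⊆ ⋃ i ∈ Finset.range M, (A i ∪ B i) := by
    intro ω hω
    obtain ⟨i, hiM, hD, hKS⟩ := hω
    refine Set.mem_biUnion (show i ∈ ↑(Finset.range M) from Finset.mem_coe.mpr
      (Finset.mem_range.mpr hiM)) ?_
    have hbdd : BddAbove (Set.range fun x : ℝ => |ecdfSeq (Y i) K ω x - ecdfSeq X N ω x|) := by
      refine ⟨2, ?_⟩
      rintro v ⟨x, rfl⟩
      have ha := ecdfSeq_mem_Icc (Y i) K ω x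
      have hb := ecdfSeq_mem_Icc X N ω x
      rw [Set.mem_Icc] at ha hb
      exact abs_le.mpr ⟨by linarith [ha.1, hb.2], by linarith [ha.2, hb.1]⟩
    have hks : |ecdfSeq (Y i) K ω (xi i) - ecdfSeq X N ω (xi i)| ≤ ε / 2 :=
      le_trans (le_trans (le_ciSup hbdd (xi i)) hKS) ht
    have hxval := hxi i hD
    by_contra hno
    rw [Set.mem_union] at hno
    push_neg at hno
    obtain ⟨hnA, hnB⟩ := hno
    rw [hAdef] at hnA
    rw [hBdef] at hnB
    simp only [Set.mem_setOf_eq, not_lt] at hnA hnB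
    have t1 : |(ν i (Set.Iic (xi i))).toReal - (μ (Set.Iic (xi i))).toReal| ≤
        |(ν i (Set.Iic (xi i))).toReal - ecdfSeq (Y i) K ω (xi i)| +
        (|ecdfSeq (Y i) K ω (xi i) - ecdfSeq X N ω (xi i)| +
         |ecdfSeq X N ω (xi i) - (μ (Set.Iic (xi i))).toReal|) :=
      le_trans (abs_sub_le _ (ecdfSeq (Y i) K ω (xi i)) _)
        (by gcongr; exact abs_sub_le _ (ecdfSeq X N ω (xi i)) _)
    rw [abs_sub_comm] at hnA
    linarith
  -- deviation bounds
  have hδ0 : 0 < ε / 4 := by positivity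
  have hδ1 : ε / 4 ≤ 1 := by linarith
  have hAbound : ∀ i, (Pr (A i)).toReal ≤ 2 * Real.exp (-((K:ℝ) * (ε/4) ^ 2) / 8) := fun i =>
    chernoff_ecdf Pr (ν i) (Y i) (hYm i) (hYindep i) (hY i) K h2 (xi i) hδ0 hδ1
  have hBbound : ∀ i, (Pr (B i)).toReal ≤ 2 * Real.exp (-((N:ℝ) * (ε/4) ^ 2) / 8) := fun i =>
    chernoff_ecdf Pr μ X hXm hXindep hX N h4 (xi i) hδ0 hδ1
  -- final constants
  set c' : ℝ := min c 1 with hc'def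
  have hc'0 : 0 < c' := lt_min hc one_pos
  have hc'c : c' ≤ c := min_le_left _ _
  have hc'1 : c' ≤ 1 := min_le_right _ _
  have hKc' : c' * (N:ℝ) ≤ (K:ℝ) :=
    le_trans (mul_le_mul_of_nonneg_right hc'c hN0.le) h3
  have eK : Real.exp (-((K:ℝ) * (ε/4) ^ 2) / 8) ≤ Real.exp (-(c' * (N:ℝ) * ε ^ 2) / 128) := by
    apply Real.exp_le_exp.mpr
    nlinarith [mul_le_mul_of_nonneg_right hKc' (sq_nonneg ε)]
  have eN : Real.exp (-((N:ℝ) * (ε/4) ^ 2) / 8) ≤ Real.exp (-(c' * (N:ℝ) * ε ^ 2) / 128) := by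
    apply Real.exp_le_exp.mpr
    nlinarith [mul_le_mul_of_nonneg_right (mul_le_mul_of_nonneg_right hc'1 hN0.le)
      (sq_nonneg ε)]
  have h6' : 256 * (M:ℝ) ≤ (N:ℝ) * c' := (div_le_div_iff₀ hc'0 hM0).mp h6
  have eM : Real.exp (-(c' * (N:ℝ) * ε ^ 2) / 128) ≤ (M:ℝ)⁻¹ * (M:ℝ)⁻¹ := by
    have hMM : (M:ℝ)⁻¹ * (M:ℝ)⁻¹ = Real.exp (-(2 * Real.log (M:ℝ))) := by
      rw [show -(2 * Real.log (M:ℝ)) = -Real.log (M:ℝ) + -Real.log (M:ℝ) by ring,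
        Real.exp_add, Real.exp_neg, Real.exp_log hM0]
    rw [hMM]
    apply Real.exp_le_exp.mpr
    rw [neg_div, neg_le_neg_iff, hεsq,
      show c' * (N:ℝ) * (Real.log (M:ℝ) / (M:ℝ)) / 128 = c' * (N:ℝ) * Real.log (M:ℝ) / (128 * (M:ℝ)) by ring,
      le_div_iff₀ (by positivity)]
    nlinarith [mul_le_mul_of_nonneg_right h6' (le_trans zero_le_one hlogM)]
  -- put everything together
  have hfin : (∑ i ∈ Finset.range M, Pr (A i ∪ B i)) ≠ ⊤ :=
    (ENNReal.sum_lt_top.mpr fun i _ => measure_lt_top Pr _).ne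
  calc (Pr {ω | ∃ i < M,
        ε < (⨆ x : ℝ, |(ν i (Set.Iic x)).toReal - (μ (Set.Iic x)).toReal|) ∧
        (⨆ x : ℝ, |ecdfSeq (Y i) K ω x - ecdfSeq X N ω x|) ≤
          Real.sqrt (((K:ℝ) + (N:ℝ)) / ((K:ℝ) * (N:ℝ))) * Real.sqrt C}).toReal
      ≤ (∑ i ∈ Finset.range M, Pr (A i ∪ B i)).toReal :=
        ENNReal.toReal_mono hfin
          ((measure_mono hsub).trans (measure_biUnion_finset_le _ _))
    _ = ∑ i ∈ Finset.range M, (Pr (A i ∪ B i)).toReal :=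
        ENNReal.toReal_sum fun i _ => measure_ne_top _ _
    _ ≤ ∑ _i ∈ Finset.range M,
          (2 * Real.exp (-((K:ℝ) * (ε/4) ^ 2) / 8) + 2 * Real.exp (-((N:ℝ) * (ε/4) ^ 2) / 8)) := by
        refine Finset.sum_le_sum fun i _ => ?_
        calc (Pr (A i ∪ B i)).toReal ≤ (Pr (A i) + Pr (B i)).toReal :=
              ENNReal.toReal_mono
                (ENNReal.add_ne_top.mpr ⟨measure_ne_top _ _, measure_ne_top _ _⟩)
                (measure_union_le _ _)
          _ = (Pr (A i)).toReal + (Pr (B i)).toReal :=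
              ENNReal.toReal_add (measure_ne_top _ _) (measure_ne_top _ _)
          _ ≤ _ := add_le_add (hAbound i) (hBbound i)
    _ = (M:ℝ) * (2 * Real.exp (-((K:ℝ) * (ε/4) ^ 2) / 8)
          + 2 * Real.exp (-((N:ℝ) * (ε/4) ^ 2) / 8)) := by
        rw [Finset.sum_const, Finset.card_range, nsmul_eq_mul]
    _ ≤ (M:ℝ) * (4 * ((M:ℝ)⁻¹ * (M:ℝ)⁻¹)) := by
        apply mul_le_mul_of_nonneg_left _ hM0.le
        linarith [eK.trans eM, eN.trans eM]
    _ = 4 / (M:ℝ) := by field_simp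
end
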